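/- arXiv:2512.05775 — 5 statements merged into one kernel-verified Lean document; each statement's English description precedes it below -/
import Mathlib

section
/- Let f : ℝ^m → ℝ be differentiable, μ-strongly convex and L-smooth with 0 < μ ≤ L, and let x* ∈ ℝ^m satisfy ∇f(x*) = 0. Then for every stepsize η with 0 < η ≤ 2/(μ + L) and every x ∈ ℝ^m, ‖x − η∇f(x) − x*‖ ≤ (1 − μη)‖x − x*‖. -/
open RealInnerProductSpace intervalIntegral

variable {F : Type*} [NormedAddCommGroup F] [InnerProductSpace ℝ F] [CompleteSpace F]

lemma hga_of_fderiv {f : F → ℝ} {g : F} {x : F} {f' : F →L[ℝ] ℝ}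
    (hf : HasFDerivAt f f' x) (h : ∀ y, f' y = ⟪g, y⟫) : HasGradientAt f g x := by
  rw [hasGradientAt_iff_hasFDerivAt]
  have hd : InnerProductSpace.toDual ℝ F g = f' := by
    ext y
    simp [InnerProductSpace.toDual_apply_apply, h y]
  rw [hd]; exact hf

lemma line_hasDerivAt {f : F → ℝ} {g : F → F} (hg : ∀ x, HasGradientAt f (g x) x)
    (u d : F) (t : ℝ) :
    HasDerivAt (fun s : ℝ => f (u + s • d)) ⟪g (u + t • d), d⟫ t := by
  have hc : HasDerivAt (fun s : ℝ => u + s • d) d t := by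
    simpa using ((hasDerivAt_id t).smul_const d).const_add u
  have hf : HasFDerivAt f (InnerProductSpace.toDual ℝ F (g (u + t • d))) (u + t • d) :=
    (hasGradientAt_iff_hasFDerivAt.1 (hg (u + t • d)))
  simpa [InnerProductSpace.toDual_apply_apply, Function.comp_def] using hf.comp_hasDerivAt t hc

lemma ftc_line {f : F → ℝ} {g : F → F} (hg : ∀ x, HasGradientAt f (g x) x)
    (hgc : Continuous g) (u v : F) :
    f v - f u = ∫ t in (0:ℝ)..1, ⟪g (u + t • (v - u)), v - u⟫ := by
  have h := integral_eq_sub_of_hasDerivAt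
    (f := fun s : ℝ => f (u + s • (v - u)))
    (f' := fun t : ℝ => ⟪g (u + t • (v - u)), v - u⟫) (a := 0) (b := 1)
    (fun t _ => line_hasDerivAt hg u (v - u) t) ?_
  · rw [h]; simp
  · apply Continuous.intervalIntegrable
    exact (hgc.comp (continuous_const.add (continuous_id.smul continuous_const))).inner
      continuous_const

lemma upper_bound {f : F → ℝ} {g : F → F} (hg : ∀ x, HasGradientAt f (g x) x)
    (hgc : Continuous g) {K : ℝ}
    (hK : ∀ a b, ⟪g a - g b, a - b⟫ ≤ K * ‖a - b‖ ^ 2) (u v : F) :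
    f v ≤ f u + ⟪g u, v - u⟫ + K / 2 * ‖v - u‖ ^ 2 := by
  have hftc := ftc_line hg hgc u v
  set d := v - u with hd
  have hcont : Continuous fun t : ℝ => ⟪g (u + t • d), d⟫ :=
    (hgc.comp (continuous_const.add (continuous_id.smul continuous_const))).inner
      continuous_const
  have hmono : (∫ t in (0:ℝ)..1, ⟪g (u + t • d), d⟫)
      ≤ ∫ t in (0:ℝ)..1, (⟪g u, d⟫ + K * t * ‖d‖ ^ 2) := by
    apply integral_mono_on (by norm_num)
    · exact hcont.intervalIntegrable 0 1
    · exact Continuous.intervalIntegrable (by continuity) 0 1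
    · intro t ht
      rcases eq_or_lt_of_le ht.1 with h0 | h0
      · simp [← h0]
      · have h1 := hK (u + t • d) u
        have h2 : (u + t • d) - u = t • d := by abel
        rw [h2] at h1
        simp only [inner_sub_left, inner_smul_right, norm_smul, Real.norm_eq_abs,
          abs_of_pos h0] at h1
        nlinarith
  have hint : (∫ t in (0:ℝ)..1, (⟪g u, d⟫ + K * t * ‖d‖ ^ 2))
      = ⟪g u, d⟫ + K / 2 * ‖d‖ ^ 2 := by
    rw [integral_add (intervalIntegrable_const)
      (Continuous.intervalIntegrable (by continuity) 0 1)]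
    simp only [integral_const, smul_eq_mul]
    have : (∫ t in (0:ℝ)..1, K * t * ‖d‖ ^ 2)
        = K * ‖d‖ ^ 2 * ∫ t in (0:ℝ)..1, t := by
      rw [← integral_const_mul]; congr 1; ext t; ring
    rw [this, integral_id]; ring
  rw [hint] at hmono
  linarith [hftc ▸ hmono]

lemma lower_bound {f : F → ℝ} {g : F → F} (hg : ∀ x, HasGradientAt f (g x) x)
    (hgc : Continuous g)
    (hM : ∀ a b, 0 ≤ ⟪g a - g b, a - b⟫) (u v : F) :
    f u + ⟪g u, v - u⟫ ≤ f v := by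
  have hftc := ftc_line hg hgc u v
  set d := v - u with hd
  have hcont : Continuous fun t : ℝ => ⟪g (u + t • d), d⟫ :=
    (hgc.comp (continuous_const.add (continuous_id.smul continuous_const))).inner
      continuous_const
  have hmono : (∫ t in (0:ℝ)..1, (⟪g u, d⟫ : ℝ))
      ≤ ∫ t in (0:ℝ)..1, ⟪g (u + t • d), d⟫ := by
    apply integral_mono_on (by norm_num)
    · exact intervalIntegrable_const
    · exact hcont.intervalIntegrable 0 1
    · intro t ht
      have h1 := hM (u + t • d) u
      have h2 : (u + t • d) - u = t • d := by abel
      rw [h2] at h1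
      simp only [inner_sub_left, inner_smul_right] at h1
      rcases eq_or_lt_of_le ht.1 with h0 | h0
      · simp [← h0]
      · nlinarith
  simp only [integral_const, smul_eq_mul, one_smul, sub_zero] at hmono
  linarith [hftc ▸ hmono]

lemma grad_sub_linear {f : F → ℝ} {g : F → F} (hg : ∀ x, HasGradientAt f (g x) x)
    (c : F) (w : F) :
    HasGradientAt (fun w => f w - ⟪c, w⟫) (g w - c) w := by
  have h1 : HasFDerivAt (fun w => f w - ⟪c, w⟫)
      ((InnerProductSpace.toDual ℝ F (g w)) - innerSL ℝ c) w :=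
    (hasGradientAt_iff_hasFDerivAt.1 (hg w)).sub ((innerSL ℝ c).hasFDerivAt)
  refine hga_of_fderiv h1 fun y => ?_
  simp [InnerProductSpace.toDual_apply_apply, inner_sub_left]

lemma coco {f : F → ℝ} {g : F → F} (hg : ∀ x, HasGradientAt f (g x) x)
    (hgc : Continuous g) {K : ℝ} (hKpos : 0 < K)
    (hK : ∀ a b, ⟪g a - g b, a - b⟫ ≤ K * ‖a - b‖ ^ 2)
    (hM : ∀ a b, 0 ≤ ⟪g a - g b, a - b⟫) (u v : F) :
    ‖g v - g u‖ ^ 2 ≤ K * ⟪g v - g u, v - u⟫ := by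
  have key : ∀ p q : F, f p + ⟪g p, q - p⟫ + 1/(2*K) * ‖g q - g p‖^2 ≤ f q := by
    intro p q
    set c := g p with hc
    have hgφa : ∀ w, HasGradientAt (fun w => f w - ⟪c, w⟫) (g w - c) w :=
      grad_sub_linear hg c
    have hgφc : Continuous fun w => g w - c := hgc.sub continuous_const
    have hsub : ∀ a b : F, (g a - c) - (g b - c) = g a - g b := fun a b => by abel
    have hKφ : ∀ a b, ⟪(g a - c) - (g b - c), a - b⟫ ≤ K * ‖a - b‖ ^ 2 := fun a b => by
      rw [hsub]; exact hK a b
    have hMφ : ∀ a b, 0 ≤ ⟪(g a - c) - (g b - c), a - b⟫ := fun a b => by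
      rw [hsub]; exact hM a b
    set z := q - (1/K) • (g q - c) with hz
    have hlow := lower_bound hgφa hgφc hMφ p z
    have hup := upper_bound hgφa hgφc hKφ q z
    have hgp : g p - c = 0 := by simp [hc]
    rw [hgp, inner_zero_left] at hlow
    have hzq : z - q = -((1/K) • (g q - c)) := by rw [hz]; abel
    rw [hzq, inner_neg_right, real_inner_smul_right, norm_neg, norm_smul,
      real_inner_self_eq_norm_sq] at hup
    have hKne : K ≠ 0 := ne_of_gt hKpos
    have h1 : ⟪g q, z - q⟫ = ⟪g q - c + c, z - q⟫ := by rw [sub_add_cancel]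
    have habs : ‖(1:ℝ)/K‖ = 1/K := by
      rw [Real.norm_eq_abs, abs_of_pos (by positivity)]
    rw [habs] at hup
    have hcz : ⟪c, z - p⟫ = ⟪c, q - p⟫ + ⟪c, z - q⟫ := by
      rw [← inner_add_right]; congr 1; abel
    -- combine: f p - ⟪c,p⟫ ≤ f z - ⟪c,z⟫ ≤ f q - ⟪c,q⟫ - 1/(2K)‖g q - c‖²
    have hfinal : f p + ⟪c, q - p⟫ + 1/(2*K) * ‖g q - c‖^2 ≤ f q := by
      have e1 : ⟪c, q - p⟫ = ⟪c, q⟫ - ⟪c, p⟫ := inner_sub_right c q p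
      have esq : K/2 * (1/K * ‖g q - c‖)^2 = 1/(2*K) * ‖g q - c‖^2 := by
        field_simp
      have e4 : 1/K * ‖g q - c‖^2 = 2 * (1/(2*K) * ‖g q - c‖^2) := by
        field_simp
      linarith [hlow, hup]
    simpa [hc] using hfinal
  have h1 := key u v
  have h2 := key v u
  rw [norm_sub_rev (g u) (g v)] at h2
  have h4 : ⟪g v - g u, v - u⟫ = ⟪g v, v - u⟫ - ⟪g u, v - u⟫ := inner_sub_left _ _ _
  have h5 : ⟪g v, u - v⟫ = -⟪g v, v - u⟫ := by
    rw [show u - v = -(v - u) by abel, inner_neg_right]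
  have hB : 1/K * ‖g v - g u‖^2 ≤ ⟪g v - g u, v - u⟫ := by
    rw [h4]
    rw [h5] at h2
    have hKK : 1/K * ‖g v - g u‖^2 = 2 * (1/(2*K) * ‖g v - g u‖^2) := by
      field_simp
    rw [hKK]
    linarith [h1, h2]
  have := mul_le_mul_of_nonneg_left hB hKpos.le
  calc ‖g v - g u‖^2 = K * (1/K * ‖g v - g u‖^2) := by field_simp
    _ ≤ K * ⟪g v - g u, v - u⟫ := this


set_option maxHeartbeats 1000000 in
/-- For a differentiable, `μ`-strongly convex and `L`-smooth
function `f : ℝ^m → ℝ` with `0 < μ ≤ L`, a stationary point `x*` (`∇f(x*) = 0`)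
and any stepsize `0 < η ≤ 2/(μ+L)`:
`‖x − η ∇f(x) − x*‖ ≤ (1 − μη) ‖x − x*‖` for every `x`. -/
theorem statement1 {m : ℕ} (f : EuclideanSpace ℝ (Fin m) → ℝ) (L μ : ℝ)
    (hμ : 0 < μ) (hμL : μ ≤ L)
    (hdiff : Differentiable ℝ f)
    (hsmooth : ∀ u v : EuclideanSpace ℝ (Fin m),
      ‖gradient f u - gradient f v‖ ≤ L * ‖u - v‖)
    (hsc : ∀ u v : EuclideanSpace ℝ (Fin m),
      ⟪gradient f u - gradient f v, u - v⟫ ≥ μ * ‖u - v‖ ^ 2)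
    (xstar : EuclideanSpace ℝ (Fin m)) (hstat : gradient f xstar = 0)
    (η : ℝ) (hη0 : 0 < η) (hη : η ≤ 2 / (μ + L))
    (x : EuclideanSpace ℝ (Fin m)) :
    ‖x - η • gradient f x - xstar‖ ≤ (1 - μ * η) * ‖x - xstar‖ := by
  set g := gradient f with hgdef
  have hg : ∀ y, HasGradientAt f (g y) y := fun y => (hdiff y).hasGradientAt
  have hgc : Continuous g := by
    apply LipschitzWith.continuous (K := Real.toNNReal L)
    apply LipschitzWith.of_dist_le_mul
    intro a b
    rw [dist_eq_norm, dist_eq_norm, Real.coe_toNNReal']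
    calc ‖g a - g b‖ ≤ L * ‖a - b‖ := hsmooth a b
      _ ≤ max L 0 * ‖a - b‖ :=
        mul_le_mul_of_nonneg_right (le_max_left L 0) (norm_nonneg _)
  have hsum : 0 < μ + L := by linarith
  have hη2 : η * (μ + L) ≤ 2 := by
    rw [le_div_iff₀ hsum] at hη; linarith
  have hμη : μ * η ≤ 1 := by nlinarith [mul_le_mul_of_nonneg_right hμL hη0.le]
  have h1μη : 0 ≤ 1 - μ * η := by linarith
  have hsq : ‖x - η • g x - xstar‖ ^ 2 ≤ ((1 - μ * η) * ‖x - xstar‖) ^ 2 := by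
    have hrw0 : x - η • g x - xstar = (x - xstar) - η • g x := sub_right_comm x (η • g x) xstar
    rcases eq_or_lt_of_le hμL with hEq | hLt
    · -- μ = L
      subst hEq
      have hgd : μ * ‖x - xstar‖ ^ 2 ≤ ⟪g x, x - xstar⟫ := by
        have := hsc x xstar
        rw [hstat, sub_zero] at this
        exact this
      have hgn : ‖g x‖ ≤ μ * ‖x - xstar‖ := by
        have := hsmooth x xstar
        rwa [hstat, sub_zero] at this
      rw [hrw0, norm_sub_sq_real, real_inner_smul_right, norm_smul, mul_pow,
        Real.norm_eq_abs, sq_abs]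
      have hcomm : ⟪x - xstar, g x⟫ = ⟪g x, x - xstar⟫ := real_inner_comm _ _
      rw [hcomm]
      nlinarith [hgd, mul_le_mul hgn hgn (norm_nonneg _) (by positivity),
        mul_le_mul_of_nonneg_left hgd hη0.le, sq_nonneg η, hη0.le,
        mul_nonneg (mul_nonneg hη0.le hη0.le) (sq_nonneg ‖x - xstar‖)]
    · -- μ < L
      set gh := fun w : EuclideanSpace ℝ (Fin m) => g w - μ • w with hghdef
      have hgh : ∀ w, HasGradientAt (fun w => f w - μ / 2 * ‖w‖ ^ 2) (gh w) w := by
        intro w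
        have hsq' : HasFDerivAt (fun w : EuclideanSpace ℝ (Fin m) => μ / 2 * ‖w‖ ^ 2)
            ((μ / 2) • (2 • (innerSL ℝ w))) w :=
          ((hasStrictFDerivAt_norm_sq w).hasFDerivAt).const_mul (μ / 2)
        have h1 := (hasGradientAt_iff_hasFDerivAt.1 (hg w)).sub hsq'
        refine hga_of_fderiv h1 fun y => ?_
        simp only [ContinuousLinearMap.coe_sub', Pi.sub_apply,
          InnerProductSpace.toDual_apply_apply, ContinuousLinearMap.coe_smul', Pi.smul_apply,
          innerSL_apply_apply, smul_eq_mul, hghdef, inner_sub_left, real_inner_smul_left]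
        ring
      have hghc : Continuous gh := hgc.sub (continuous_id.const_smul μ)
      have hsubrw : ∀ a b, gh a - gh b = (g a - g b) - μ • (a - b) := fun a b => by
        simp only [hghdef]; rw [smul_sub]; abel
      have hKh : ∀ a b, ⟪gh a - gh b, a - b⟫ ≤ (L - μ) * ‖a - b‖ ^ 2 := by
        intro a b
        rw [hsubrw, inner_sub_left, real_inner_smul_left, real_inner_self_eq_norm_sq]
        have h1 := real_inner_le_norm (g a - g b) (a - b)
        have h2 := mul_le_mul_of_nonneg_right (hsmooth a b) (norm_nonneg (a - b))
        nlinarith [h1, h2]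
      have hMh : ∀ a b, 0 ≤ ⟪gh a - gh b, a - b⟫ := by
        intro a b
        rw [hsubrw, inner_sub_left, real_inner_smul_left, real_inner_self_eq_norm_sq]
        linarith [hsc a b]
      have hco := coco hgh hghc (by linarith : (0:ℝ) < L - μ) hKh hMh xstar x
      have hG : gh x - gh xstar = g x - μ • (x - xstar) := by
        rw [hsubrw x xstar, hstat, sub_zero]
      rw [hG] at hco
      set d := x - xstar with hd
      set G := g x - μ • d with hGdef
      have hGd : 0 ≤ ⟪G, d⟫ := by nlinarith [hco, sq_nonneg ‖G‖]
      have hrw : (1 - μ * η) • d - η • G = d - η • g x := by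
        simp only [hGdef, hd, smul_sub, sub_smul, one_smul, smul_smul, mul_comm η μ]
        abel
      rw [hrw0, ← hrw, norm_sub_sq_real, real_inner_smul_left,
        real_inner_smul_right, norm_smul, norm_smul, mul_pow, mul_pow,
        Real.norm_eq_abs, Real.norm_eq_abs, sq_abs, sq_abs]
      have hcomm : ⟪d, G⟫ = ⟪G, d⟫ := real_inner_comm _ _
      rw [hcomm]
      have t1 : 0 ≤ η * ⟪G, d⟫ * (2 - η * (μ + L)) :=
        mul_nonneg (mul_nonneg hη0.le hGd) (by linarith)
      have t2 : η ^ 2 * ‖G‖ ^ 2 ≤ η ^ 2 * ((L - μ) * ⟪G, d⟫) :=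
        mul_le_mul_of_nonneg_left hco (sq_nonneg η)
      linarith [t1, t2]
  have hfin := Real.sqrt_le_sqrt hsq
  rwa [Real.sqrt_sq (norm_nonneg _), Real.sqrt_sq (by positivity)] at hfin
end

section
/- Let x ∈ ℝ^m with x ≠ 0 and let s be a positive integer. Define the stochastic quantizer C_Q(x) as the random vector with independent coordinates such that, setting ℓ_i := ⌊s|x_i|/‖x‖⌋ and δ_i := s|x_i|/‖x‖ − ℓ_i, the i-th coordinate of C_Q(x) equals (‖x‖/s)·sgn(x_i)·(ℓ_i + 1) with probability δ_i and equals (‖x‖/s)·sgn(x_i)·ℓ_i with probability 1 − δ_i. Then E[C_Q(x)] = x and E[‖C_Q(x) − x‖²] ≤ min{m/s², √m/s}·‖x‖². -/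
open MeasureTheory

namespace StochasticQuantizer

variable {m : ℕ}

/-- `ℓ_i = ⌊ s |x_i| / ‖x‖ ⌋`. -/
noncomputable def ell (s : ℕ) (x : EuclideanSpace ℝ (Fin m)) (i : Fin m) : ℤ :=
  ⌊(s : ℝ) * |x i| / ‖x‖⌋

/-- `δ_i = s |x_i| / ‖x‖ − ℓ_i`. -/
noncomputable def delta (s : ℕ) (x : EuclideanSpace ℝ (Fin m)) (i : Fin m) : ℝ :=
  (s : ℝ) * |x i| / ‖x‖ - (ell s x i : ℝ)

/-- The low quantization value `(‖x‖/s) sgn(x_i) ℓ_i`. -/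
noncomputable def low (s : ℕ) (x : EuclideanSpace ℝ (Fin m)) (i : Fin m) : ℝ :=
  ‖x‖ / (s : ℝ) * Real.sign (x i) * (ell s x i : ℝ)

/-- The high quantization value `(‖x‖/s) sgn(x_i) (ℓ_i + 1)`. -/
noncomputable def high (s : ℕ) (x : EuclideanSpace ℝ (Fin m)) (i : Fin m) : ℝ :=
  ‖x‖ / (s : ℝ) * Real.sign (x i) * ((ell s x i : ℝ) + 1)

/-- Distribution of the `i`-th coordinate of the stochastic quantizer: it takes the
value `high` with probability `δ_i` and the value `low` with probability `1 − δ_i`. -/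
noncomputable def coordLaw (s : ℕ) (x : EuclideanSpace ℝ (Fin m)) (i : Fin m) :
    Measure ℝ :=
  Real.toNNReal (1 - delta s x i) • Measure.dirac (low s x i) +
    Real.toNNReal (delta s x i) • Measure.dirac (high s x i)

instance (s : ℕ) (x : EuclideanSpace ℝ (Fin m)) (i : Fin m) :
    IsFiniteMeasure (coordLaw s x i) := by
  unfold coordLaw; infer_instance

/-- The law of the stochastic quantizer `C_Q(x)`: its coordinates are independent,
the `i`-th coordinate distributed according to `coordLaw`. -/
noncomputable def quantizerLaw (s : ℕ) (x : EuclideanSpace ℝ (Fin m)) :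
    Measure (EuclideanSpace ℝ (Fin m)) :=
  (Measure.pi (coordLaw s x)).map (MeasurableEquiv.toLp 2 (Fin m → ℝ))

/-! ### Auxiliary lemmas -/

lemma delta_eq_fract (s : ℕ) (x : EuclideanSpace ℝ (Fin m)) (i : Fin m) :
    delta s x i = Int.fract ((s : ℝ) * |x i| / ‖x‖) := rfl

lemma delta_nonneg (s : ℕ) (x : EuclideanSpace ℝ (Fin m)) (i : Fin m) :
    0 ≤ delta s x i := by rw [delta_eq_fract]; exact Int.fract_nonneg _

lemma delta_lt_one (s : ℕ) (x : EuclideanSpace ℝ (Fin m)) (i : Fin m) :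
    delta s x i < 1 := by rw [delta_eq_fract]; exact Int.fract_lt_one _

lemma ell_nonneg (s : ℕ) (x : EuclideanSpace ℝ (Fin m)) (i : Fin m) :
    (0 : ℤ) ≤ ell s x i :=
  Int.floor_nonneg.2 (by positivity)

lemma delta_le (s : ℕ) (x : EuclideanSpace ℝ (Fin m)) (i : Fin m) :
    delta s x i ≤ (s : ℝ) * |x i| / ‖x‖ := by
  unfold delta
  have h := ell_nonneg s x i
  have : (0:ℝ) ≤ (ell s x i : ℝ) := by exact_mod_cast h
  linarith

instance probCoordLaw (s : ℕ) (x : EuclideanSpace ℝ (Fin m)) (i : Fin m) :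
    IsProbabilityMeasure (coordLaw s x i) := by
  constructor
  have h0 := delta_nonneg s x i
  have h1 := (delta_lt_one s x i).le
  simp only [coordLaw, Measure.add_apply, Measure.smul_apply, measure_univ, smul_eq_mul, mul_one]
  rw [ENNReal.smul_def, ENNReal.smul_def, smul_eq_mul, smul_eq_mul, mul_one, mul_one,
    ← ENNReal.ofReal, ← ENNReal.ofReal, ← ENNReal.ofReal_add (by linarith) h0]
  norm_num

lemma integrable_dirac'' {f : ℝ → ℝ} (hf : Measurable f) (a : ℝ) :
    Integrable f (Measure.dirac a) :=
  ⟨hf.aestronglyMeasurable, by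
    simp [HasFiniteIntegral,
      lintegral_dirac' a (by fun_prop : Measurable fun t => (‖f t‖₊ : ENNReal))]⟩

lemma integrable_coordLaw (s : ℕ) (x : EuclideanSpace ℝ (Fin m)) (i : Fin m)
    {f : ℝ → ℝ} (hf : Measurable f) :
    Integrable f (coordLaw s x i) := by
  refine Integrable.add_measure ?_ ?_ <;>
  · refine Integrable.smul_measure ?_ ENNReal.coe_ne_top
    exact integrable_dirac'' hf _

lemma integral_coordLaw (s : ℕ) (x : EuclideanSpace ℝ (Fin m)) (i : Fin m)
    {f : ℝ → ℝ} (hf : Measurable f) :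
    ∫ t, f t ∂coordLaw s x i
      = (1 - delta s x i) * f (low s x i) + delta s x i * f (high s x i) := by
  have h0 := delta_nonneg s x i
  have h1 := (delta_lt_one s x i).le
  unfold coordLaw
  rw [ENNReal.smul_def, ENNReal.smul_def,
    integral_add_measure
      (Integrable.smul_measure (integrable_dirac'' hf _) ENNReal.coe_ne_top)
      (Integrable.smul_measure (integrable_dirac'' hf _) ENNReal.coe_ne_top),
    integral_smul_measure, integral_smul_measure, integral_dirac, integral_dirac]
  simp [ENNReal.coe_toNNReal_eq_toReal, Real.coe_toNNReal _ (by linarith : (0:ℝ) ≤ 1 - delta s x i),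
    Real.coe_toNNReal _ h0]

lemma real_sign_mul_abs (r : ℝ) : Real.sign r * |r| = r := by
  rcases lt_trichotomy r 0 with h|h|h
  · rw [Real.sign_of_neg h, abs_of_neg h]; ring
  · simp [h, Real.sign_zero]
  · rw [Real.sign_of_pos h, abs_of_pos h]; ring

lemma key (s : ℕ) (hs : 0 < s) (x : EuclideanSpace ℝ (Fin m)) (hx : x ≠ 0) (i : Fin m) :
    ‖x‖ / (s : ℝ) * Real.sign (x i) * ((ell s x i : ℝ) + delta s x i) = x i := by
  have hn : (0:ℝ) < ‖x‖ := norm_pos_iff.2 hx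
  have hs' : (0:ℝ) < (s:ℝ) := by exact_mod_cast hs
  have h1 : (ell s x i : ℝ) + delta s x i = (s : ℝ) * |x i| / ‖x‖ := by
    unfold delta; ring
  rw [h1]
  have h2 : ‖x‖ / (s:ℝ) * Real.sign (x i) * ((s:ℝ) * |x i| / ‖x‖)
      = Real.sign (x i) * |x i| := by field_simp
  rw [h2, real_sign_mul_abs]

lemma mean_eq (s : ℕ) (hs : 0 < s) (x : EuclideanSpace ℝ (Fin m)) (hx : x ≠ 0) (i : Fin m) :
    (1 - delta s x i) * low s x i + delta s x i * high s x i = x i := by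
  have := key s hs x hx i
  unfold low high
  nlinarith [this]

lemma var_eq (s : ℕ) (hs : 0 < s) (x : EuclideanSpace ℝ (Fin m)) (hx : x ≠ 0) (i : Fin m) :
    (1 - delta s x i) * (low s x i - x i) ^ 2 + delta s x i * (high s x i - x i) ^ 2
      = (‖x‖ / (s : ℝ)) ^ 2 * (delta s x i * (1 - delta s x i)) := by
  have hkey := key s hs x hx i
  rcases eq_or_ne (x i) 0 with h0 | h0
  · have hd : delta s x i = 0 := by
      simp [delta, ell, h0]
    have hl : low s x i = 0 := by simp [low, h0, Real.sign_zero]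
    rw [h0, hd, hl]; ring
  · have hsgn : Real.sign (x i) ^ 2 = 1 := by
      rcases lt_or_gt_of_ne h0 with h | h
      · rw [Real.sign_of_neg h]; ring
      · rw [Real.sign_of_pos h]; ring
    unfold low high
    set S := Real.sign (x i) with hS
    have hlow : ‖x‖ / (s : ℝ) * S * (ell s x i : ℝ) - x i
        = -(‖x‖ / (s : ℝ) * S * delta s x i) := by
      rw [← hkey]; ring
    have hhigh : ‖x‖ / (s : ℝ) * S * ((ell s x i : ℝ) + 1) - x i
        = ‖x‖ / (s : ℝ) * S * (1 - delta s x i) := by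
      rw [← hkey]; ring
    rw [hlow, hhigh]
    have expand : (1 - delta s x i) * (-(‖x‖ / (s:ℝ) * S * delta s x i)) ^ 2 +
        delta s x i * (‖x‖ / (s:ℝ) * S * (1 - delta s x i)) ^ 2
        = (‖x‖ / (s:ℝ)) ^ 2 * S ^ 2 * (delta s x i * (1 - delta s x i)) := by ring
    rw [expand, hsgn, mul_one]

lemma apply_sum {n : ℕ} (f : Fin n → EuclideanSpace ℝ (Fin n)) (j : Fin n) :
    (∑ i, f i) j = ∑ i, f i j :=
  by rw [WithLp.ofLp_sum]; exact Finset.sum_apply j Finset.univ _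

lemma map_eval (ν : Fin m → Measure ℝ) [∀ i, IsProbabilityMeasure (ν i)] (i : Fin m) :
    (Measure.pi ν).map (Function.eval i) = ν i := by
  ext s hs
  rw [Measure.map_apply (measurable_pi_apply i) hs, Set.eval_preimage, Measure.pi_pi]
  rw [Finset.prod_eq_single i]
  · simp
  · intro j _ hj; simp [Function.update_of_ne hj]
  · simp

lemma integrable_eval (ν : Fin m → Measure ℝ) [∀ i, IsProbabilityMeasure (ν i)] (i : Fin m)
    {f : ℝ → ℝ} (hf : Measurable f) (hint : Integrable f (ν i)) :
    Integrable (fun z : Fin m → ℝ => f (z i)) (Measure.pi ν) := by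
  have h : Integrable f ((Measure.pi ν).map (Function.eval i)) := by
    rw [map_eval]; exact hint
  exact (integrable_map_measure hf.aestronglyMeasurable
    (measurable_pi_apply i).aemeasurable).1 h

lemma integral_eval (ν : Fin m → Measure ℝ) [∀ i, IsProbabilityMeasure (ν i)] (i : Fin m)
    {f : ℝ → ℝ} (hf : Measurable f) :
    ∫ z : Fin m → ℝ, f (z i) ∂Measure.pi ν = ∫ t, f t ∂ν i := by
  rw [← map_eval ν i, integral_map (measurable_pi_apply i).aemeasurable
    hf.aestronglyMeasurable]

/-- For `x ≠ 0` in `ℝ^m` and a positive integer `s`, the stochastic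
quantizer `C_Q(x)` is unbiased, `E[C_Q(x)] = x`, and satisfies
`E ‖C_Q(x) − x‖² ≤ min {m/s², √m/s} ‖x‖²`. -/
theorem statement7 {m : ℕ} (s : ℕ) (hs : 0 < s)
    (x : EuclideanSpace ℝ (Fin m)) (hx : x ≠ 0) :
    (∫ y, y ∂(quantizerLaw s x)) = x ∧
      ∫ y, ‖y - x‖ ^ 2 ∂(quantizerLaw s x) ≤
        min ((m : ℝ) / (s : ℝ) ^ 2) (Real.sqrt m / (s : ℝ)) * ‖x‖ ^ 2 := by
  have hn : (0:ℝ) < ‖x‖ := norm_pos_iff.2 hx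
  have hs' : (0:ℝ) < (s:ℝ) := by exact_mod_cast hs
  set ν := coordLaw s x with hν
  have hmean : ∀ i, ∫ t, t ∂ν i = x i := by
    intro i
    rw [integral_coordLaw s x i (f := fun t => t) measurable_id]
    exact mean_eq s hs x hx i
  have hvar : ∀ i, ∫ t, (t - x i) ^ 2 ∂ν i
      = (‖x‖ / (s : ℝ)) ^ 2 * (delta s x i * (1 - delta s x i)) := by
    intro i
    rw [integral_coordLaw s x i (by fun_prop)]
    exact var_eq s hs x hx i
  constructor
  · -- unbiasedness
    rw [quantizerLaw, integral_map (f := fun y : EuclideanSpace ℝ (Fin m) => y)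
      (MeasurableEquiv.measurable _).aemeasurable aestronglyMeasurable_id]
    have hfun : (fun z : Fin m → ℝ => ((MeasurableEquiv.toLp 2 (Fin m → ℝ)) z :
        EuclideanSpace ℝ (Fin m)))
        = fun z => ∑ i, z i • (EuclideanSpace.single i (1:ℝ)) := by
      funext z
      ext j
      rw [apply_sum]
      simp [MeasurableEquiv.coe_toLp, EuclideanSpace.single_apply]
    rw [hfun]
    rw [integral_finset_sum (μ := Measure.pi ν) Finset.univ
      (f := fun (i : Fin m) (z : Fin m → ℝ) => z i • (EuclideanSpace.single i (1:ℝ)))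
      (fun i _ => (integrable_eval ν i (f := fun t => t) measurable_id
        (integrable_coordLaw s x i (f := fun t => t) measurable_id)).smul_const _)]
    have : ∀ i, ∫ z : Fin m → ℝ, z i • (EuclideanSpace.single i (1:ℝ)) ∂Measure.pi ν
        = (x i) • EuclideanSpace.single i (1:ℝ) := by
      intro i
      rw [integral_smul_const, integral_eval ν i (f := fun t => t) measurable_id, hmean i]
    simp_rw [this]
    ext j
    rw [apply_sum]
    simp [EuclideanSpace.single_apply]
  · -- variance bound
    have hcont : Continuous fun y : EuclideanSpace ℝ (Fin m) => ‖y - x‖ ^ 2 := by fun_prop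
    rw [quantizerLaw, integral_map (f := fun y : EuclideanSpace ℝ (Fin m) => ‖y - x‖ ^ 2)
      (MeasurableEquiv.measurable _).aemeasurable hcont.aestronglyMeasurable]
    have hnorm : ∀ z : Fin m → ℝ,
        ‖(MeasurableEquiv.toLp 2 (Fin m → ℝ)) z - x‖ ^ 2
          = ∑ i, (z i - x i) ^ 2 := by
      intro z
      rw [PiLp.norm_sq_eq_of_L2]
      congr 1
      funext i
      simp [MeasurableEquiv.coe_toLp, Real.norm_eq_abs, sq_abs]
    simp_rw [hnorm]
    rw [integral_finset_sum (μ := Measure.pi ν) Finset.univ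
      (f := fun (i : Fin m) (z : Fin m → ℝ) => (z i - x i) ^ 2)
      (fun i _ => integrable_eval ν i (f := fun t => (t - x i) ^ 2) (by fun_prop)
        (integrable_coordLaw s x i (f := fun t => (t - x i) ^ 2) (by fun_prop)))]
    have hsum : ∑ i, ∫ z : Fin m → ℝ, (z i - x i) ^ 2 ∂Measure.pi ν
        = (‖x‖ / (s : ℝ)) ^ 2 * ∑ i, delta s x i * (1 - delta s x i) := by
      rw [Finset.mul_sum]
      refine Finset.sum_congr rfl fun i _ => ?_
      rw [integral_eval ν i (f := fun t => (t - x i) ^ 2) (by fun_prop), hvar i]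
    rw [hsum]
    -- now the bounds
    have hterm1 : ∀ i, delta s x i * (1 - delta s x i) ≤ 1 := by
      intro i
      have h0 := delta_nonneg s x i
      have h1 := (delta_lt_one s x i).le
      nlinarith
    have hterm2 : ∀ i : Fin m, delta s x i * (1 - delta s x i) ≤ (s:ℝ) * |x i| / ‖x‖ := by
      intro i
      have h0 := delta_nonneg s x i
      have h1 := (delta_lt_one s x i).le
      have h2 := delta_le s x i
      nlinarith
    rw [min_mul_of_nonneg _ _ (by positivity : (0:ℝ) ≤ ‖x‖ ^ 2)]
    refine le_min ?_ ?_
    · have : ∑ i, delta s x i * (1 - delta s x i) ≤ (m : ℝ) := by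
        calc ∑ i, delta s x i * (1 - delta s x i) ≤ ∑ _i : Fin m, (1:ℝ) :=
              Finset.sum_le_sum fun i _ => hterm1 i
          _ = (m : ℝ) := by simp
      calc (‖x‖ / (s : ℝ)) ^ 2 * ∑ i, delta s x i * (1 - delta s x i)
          ≤ (‖x‖ / (s : ℝ)) ^ 2 * (m : ℝ) := by
            apply mul_le_mul_of_nonneg_left this (by positivity)
        _ = (m : ℝ) / (s : ℝ) ^ 2 * ‖x‖ ^ 2 := by field_simp
    · have habs : ∑ i, |x i| ≤ Real.sqrt m * ‖x‖ := by
        have hsq : (∑ i, |x i|) ^ 2 ≤ (m : ℝ) * ∑ i, |x i| ^ 2 := by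
          simpa using sq_sum_le_card_mul_sum_sq (s := Finset.univ) (f := fun i : Fin m => |x i|)
        have hx2 : ∑ i, |x i| ^ 2 = ‖x‖ ^ 2 := by
          rw [PiLp.norm_sq_eq_of_L2]
          simp [Real.norm_eq_abs]
        rw [hx2] at hsq
        have h1 : (0:ℝ) ≤ ∑ i, |x i| := Finset.sum_nonneg fun i _ => abs_nonneg _
        have := Real.sqrt_le_sqrt hsq
        rwa [Real.sqrt_sq h1, Real.sqrt_mul (by positivity), Real.sqrt_sq hn.le] at this
      have hsum2 : ∑ i, delta s x i * (1 - delta s x i) ≤ (s:ℝ) * Real.sqrt m := by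
        calc ∑ i, delta s x i * (1 - delta s x i) ≤ ∑ i, (s:ℝ) * |x i| / ‖x‖ :=
              Finset.sum_le_sum fun i _ => hterm2 i
          _ = (s:ℝ) / ‖x‖ * ∑ i, |x i| := by rw [Finset.mul_sum]; congr 1; funext i; ring
          _ ≤ (s:ℝ) / ‖x‖ * (Real.sqrt m * ‖x‖) := by
              apply mul_le_mul_of_nonneg_left habs (by positivity)
          _ = (s:ℝ) * Real.sqrt m := by field_simp
      calc (‖x‖ / (s : ℝ)) ^ 2 * ∑ i, delta s x i * (1 - delta s x i)
          ≤ (‖x‖ / (s : ℝ)) ^ 2 * ((s:ℝ) * Real.sqrt m) := by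
            apply mul_le_mul_of_nonneg_left hsum2 (by positivity)
        _ = Real.sqrt m / (s : ℝ) * ‖x‖ ^ 2 := by field_simp

end StochasticQuantizer
end

section
/- Let x ∈ ℝ^m, let 1 ≤ k ≤ m, and let S ⊆ {1, …, m} with |S| = k be such that |x_i| ≥ |x_j| for all i ∈ S and j ∉ S. Define the Top-k operator C(x) ∈ ℝ^m by (C(x))_i = x_i for i ∈ S and (C(x))_i = 0 for i ∉ S. Then ‖C(x) − x‖² ≤ (1 − k/m)·‖x‖². -/
open Finset

/-- Let `x ∈ ℝ^m`, `1 ≤ k ≤ m`, and let `S` be a set of `k`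
coordinates carrying the `k` largest absolute values of `x`. The Top-`k` operator
`C(x)` keeps the coordinates in `S` and zeroes out the rest; then
`‖C(x) − x‖² ≤ (1 − k/m) ‖x‖²`. -/
theorem statement8 {m : ℕ} (k : ℕ) (hk1 : 1 ≤ k) (hkm : k ≤ m)
    (x : EuclideanSpace ℝ (Fin m))
    (S : Finset (Fin m)) (hS : S.card = k)
    (htop : ∀ i ∈ S, ∀ j ∉ S, |x j| ≤ |x i|)
    (Cx : EuclideanSpace ℝ (Fin m)) (hCx : ∀ i, Cx i = if i ∈ S then x i else 0) :
    ‖Cx - x‖ ^ 2 ≤ (1 - (k : ℝ) / (m : ℝ)) * ‖x‖ ^ 2 := by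
  have hm0 : (0:ℝ) < (m:ℝ) := by
    have : 1 ≤ m := le_trans hk1 hkm
    exact_mod_cast Nat.pos_of_ne_zero (by omega)
  have hnorm : ∀ y : EuclideanSpace ℝ (Fin m), ‖y‖^2 = ∑ i, (y i)^2 := by
    intro y
    rw [EuclideanSpace.norm_eq, Real.sq_sqrt (by positivity)]
    simp [Real.norm_eq_abs, sq_abs]
  have hdiff : ‖Cx - x‖^2 = ∑ i ∈ Sᶜ, (x i)^2 := by
    rw [hnorm]
    rw [← Finset.sum_compl_add_sum S fun i => ((Cx - x) i)^2]
    have h1 : ∑ i ∈ Sᶜ, ((Cx - x) i)^2 = ∑ i ∈ Sᶜ, (x i)^2 := by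
      apply Finset.sum_congr rfl
      intro i hi
      rw [Finset.mem_compl] at hi
      simp [hCx i, hi, neg_sq]
    have h2 : ∑ i ∈ S, ((Cx - x) i)^2 = 0 := by
      apply Finset.sum_eq_zero
      intro i hi
      simp [hCx i, hi]
    rw [h1, h2, add_zero]
  have hx : ‖x‖^2 = ∑ i ∈ S, (x i)^2 + ∑ i ∈ Sᶜ, (x i)^2 := by
    rw [hnorm, ← Finset.sum_compl_add_sum S fun i => (x i)^2, add_comm]
  -- key inequality
  have hcard : (Sᶜ.card : ℝ) = (m : ℝ) - k := by
    have := Finset.card_compl S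
    rw [this, hS]
    simp
    push_cast [Nat.cast_sub hkm]
    ring
  have key : (k:ℝ) * ∑ j ∈ Sᶜ, (x j)^2 ≤ ((m:ℝ) - k) * ∑ i ∈ S, (x i)^2 := by
    have h : ∑ i ∈ S, ∑ j ∈ Sᶜ, (x j)^2 ≤ ∑ i ∈ S, ∑ j ∈ Sᶜ, (x i)^2 := by
      apply Finset.sum_le_sum
      intro i hi
      apply Finset.sum_le_sum
      intro j hj
      rw [Finset.mem_compl] at hj
      have := htop i hi j hj
      nlinarith [abs_nonneg (x j), sq_abs (x i), sq_abs (x j)]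
    calc (k:ℝ) * ∑ j ∈ Sᶜ, (x j)^2 = ∑ i ∈ S, ∑ j ∈ Sᶜ, (x j)^2 := by
            rw [Finset.sum_const, hS]; simp [mul_comm]
      _ ≤ ∑ i ∈ S, ∑ j ∈ Sᶜ, (x i)^2 := h
      _ = ((m:ℝ) - k) * ∑ i ∈ S, (x i)^2 := by
            rw [← hcard]
            rw [Finset.sum_comm]
            rw [Finset.sum_const]
            simp [Finset.mul_sum, mul_comm]
  rw [hdiff, hx, ← sub_nonneg]
  have heq : (1 - (k:ℝ)/(m:ℝ)) * (∑ i ∈ S, (x i)^2 + ∑ i ∈ Sᶜ, (x i)^2) - ∑ i ∈ Sᶜ, (x i)^2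
      = (((m:ℝ) - k) * ∑ i ∈ S, (x i)^2 - (k:ℝ) * ∑ j ∈ Sᶜ, (x j)^2) / m := by
    field_simp
    ring
  rw [heq]
  exact div_nonneg (by linarith) hm0.le
end

section
/- Let W ∈ ℝ^{n×n} be symmetric doubly stochastic, η > 0, W_η := I − η(I − W), ρ_η := ‖W_η − (1/n)𝟙𝟙ᵀ‖ with 0 < ρ_η < 1, w₁ := 1 + ρ_η², w₂ := 1 − ρ_η². Let ω ≥ 0, and let X, Y, H, X̃ be square-integrable random n×m matrices with E[‖X − X̃‖²] ≤ ω·E[‖X − H‖²]. Set X⁺ := W_η·X − η·Y + η(I − W)(X − X̃). Then E[‖X⁺ − X̄⁺‖²] ≤ (w₁/2)·E[‖X − X̄‖²] + (2w₁η²/w₂)·E[‖Y − Ȳ‖²] + (8η²ωw₁/w₂)·E[‖X − H‖²]. -/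
open MeasureTheory Finset

/-- Squared Frobenius norm of a real matrix. -/
def frobSq {n m : ℕ} (M : Matrix (Fin n) (Fin m) ℝ) : ℝ := ∑ i, ∑ j, (M i j) ^ 2

/-- The matrix each of whose rows is the average of the rows of `M`. -/
noncomputable def rowAvg {n m : ℕ} (M : Matrix (Fin n) (Fin m) ℝ) :
    Matrix (Fin n) (Fin m) ℝ :=
  Matrix.of fun _ j => (n : ℝ)⁻¹ * ∑ i, M i j

/-- Spectral norm (ℓ²-operator norm) of a real square matrix. -/
noncomputable def specNorm {n : ℕ} (M : Matrix (Fin n) (Fin n) ℝ) : ℝ :=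
  ‖Matrix.toEuclideanCLM (𝕜 := ℝ) M‖

lemma frobSq_nonneg {n m : ℕ} (M : Matrix (Fin n) (Fin m) ℝ) : 0 ≤ frobSq M := by
  apply Finset.sum_nonneg; intro i _; apply Finset.sum_nonneg; intro j _; positivity

lemma frobSq_smul {n m : ℕ} (c : ℝ) (M : Matrix (Fin n) (Fin m) ℝ) :
    frobSq (c • M) = c ^ 2 * frobSq M := by
  simp [frobSq, Finset.mul_sum, mul_pow]

lemma frobSq_neg {n m : ℕ} (M : Matrix (Fin n) (Fin m) ℝ) : frobSq (-M) = frobSq M := by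
  simp [frobSq]

lemma frobSq_add_le {n m : ℕ} (A B : Matrix (Fin n) (Fin m) ℝ) {β : ℝ} (hβ : 0 < β) :
    frobSq (A + B) ≤ (1 + β) * frobSq A + (1 + β⁻¹) * frobSq B := by
  unfold frobSq
  rw [Finset.mul_sum, Finset.mul_sum, ← Finset.sum_add_distrib]
  apply Finset.sum_le_sum; intro i _
  rw [Finset.mul_sum, Finset.mul_sum, ← Finset.sum_add_distrib]
  apply Finset.sum_le_sum; intro j _
  have h1 : β⁻¹ * β = 1 := inv_mul_cancel₀ hβ.ne'
  have h2 : 0 ≤ β⁻¹ := inv_nonneg.2 hβ.le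
  simp only [Matrix.add_apply]
  nlinarith [mul_nonneg h2 (sq_nonneg (β * A i j - B i j))]

lemma frobSq_sub_le_two {n m : ℕ} (A B : Matrix (Fin n) (Fin m) ℝ) :
    frobSq (A - B) ≤ 2 * frobSq A + 2 * frobSq B := by
  have := frobSq_add_le A (-B) (β := 1) one_pos
  rw [frobSq_neg] at this
  simpa [sub_eq_add_neg] using this.trans_eq (by norm_num)

lemma mulVec_sq_le {n : ℕ} (A : Matrix (Fin n) (Fin n) ℝ) (v : Fin n → ℝ) :
    ∑ i, (A.mulVec v i) ^ 2 ≤ specNorm A ^ 2 * ∑ i, v i ^ 2 := by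
  have h := (Matrix.toEuclideanCLM (𝕜 := ℝ) A).le_opNorm ((WithLp.equiv 2 (Fin n → ℝ)).symm v)
  change ‖(WithLp.equiv 2 (Fin n → ℝ)).symm (A.mulVec v)‖ ≤ _ at h
  have hnorm : ∀ w : Fin n → ℝ, ‖(WithLp.equiv 2 (Fin n → ℝ)).symm w‖
      = Real.sqrt (∑ i, w i ^ 2) := by
    intro w
    rw [EuclideanSpace.norm_eq]
    congr 1
    apply Finset.sum_congr rfl
    intro i _
    rw [Real.norm_eq_abs, sq_abs]
    rfl
  rw [hnorm, hnorm] at h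
  have h1 : (0:ℝ) ≤ ∑ i, A.mulVec v i ^ 2 := by positivity
  have h2 : (0:ℝ) ≤ ∑ i, v i ^ 2 := by positivity
  calc ∑ i, A.mulVec v i ^ 2 = Real.sqrt (∑ i, A.mulVec v i ^ 2) ^ 2 := (Real.sq_sqrt h1).symm
    _ ≤ (specNorm A * Real.sqrt (∑ i, v i ^ 2)) ^ 2 := by
        apply pow_le_pow_left₀ (Real.sqrt_nonneg _) h
    _ = specNorm A ^ 2 * ∑ i, v i ^ 2 := by rw [mul_pow, Real.sq_sqrt h2]

lemma frobSq_eq_col {n m : ℕ} (M : Matrix (Fin n) (Fin m) ℝ) :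
    frobSq M = ∑ j, ∑ i, (M i j) ^ 2 := Finset.sum_comm

lemma frobSq_mul_le {n m : ℕ} (A : Matrix (Fin n) (Fin n) ℝ) (M : Matrix (Fin n) (Fin m) ℝ) :
    frobSq (A * M) ≤ specNorm A ^ 2 * frobSq M := by
  rw [frobSq_eq_col, frobSq_eq_col, Finset.mul_sum]
  apply Finset.sum_le_sum
  intro j _
  have h := mulVec_sq_le A (fun k => M k j)
  have he : ∀ i, (A * M) i j = A.mulVec (fun k => M k j) i := by
    intro i; simp [Matrix.mul_apply, Matrix.mulVec, dotProduct]
  simpa [he] using h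

lemma frobSq_W_mul_le {n m : ℕ} (W : Matrix (Fin n) (Fin n) ℝ)
    (hWnn : ∀ i j, 0 ≤ W i j) (hWrow : ∀ i, ∑ j, W i j = 1) (hWcol : ∀ j, ∑ i, W i j = 1)
    (M : Matrix (Fin n) (Fin m) ℝ) : frobSq (W * M) ≤ frobSq M := by
  have key : ∀ i j, ((W * M) i j) ^ 2 ≤ ∑ k, W i k * (M k j) ^ 2 := by
    intro i j
    have := Finset.sum_sq_le_sum_mul_sum_of_sq_eq_mul Finset.univ
      (r := fun k => W i k * M k j) (f := fun k => W i k) (g := fun k => W i k * (M k j) ^ 2)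
      (fun k _ => hWnn i k) (fun k _ => mul_nonneg (hWnn i k) (sq_nonneg _))
      (fun k _ => by ring)
    rw [hWrow i, one_mul] at this
    simpa [Matrix.mul_apply] using this
  calc frobSq (W * M) ≤ ∑ i, ∑ j, ∑ k, W i k * (M k j) ^ 2 := by
        apply Finset.sum_le_sum; intro i _
        apply Finset.sum_le_sum; intro j _
        exact key i j
    _ = frobSq M := by
        rw [frobSq_eq_col]
        rw [Finset.sum_comm]
        apply Finset.sum_congr rfl
        intro j _
        rw [Finset.sum_comm]
        apply Finset.sum_congr rfl
        intro k _
        rw [← Finset.sum_mul, hWcol k, one_mul]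

lemma frobSq_oneSubW_mul_le {n m : ℕ} (W : Matrix (Fin n) (Fin n) ℝ)
    (hWnn : ∀ i j, 0 ≤ W i j) (hWrow : ∀ i, ∑ j, W i j = 1) (hWcol : ∀ j, ∑ i, W i j = 1)
    (M : Matrix (Fin n) (Fin m) ℝ) : frobSq ((1 - W) * M) ≤ 4 * frobSq M := by
  have h1 : (1 - W) * M = M - W * M := by
    rw [Matrix.sub_mul, Matrix.one_mul]
  have h2 : frobSq (M - W * M) ≤ 2 * frobSq M + 2 * frobSq (W * M) :=
    frobSq_sub_le_two M (W * M)
  rw [h1]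
  have := frobSq_W_mul_le W hWnn hWrow hWcol M
  linarith

lemma frobSq_rowAvg_le {n m : ℕ} (M : Matrix (Fin n) (Fin m) ℝ) :
    frobSq (rowAvg M) ≤ frobSq M := by
  rcases Nat.eq_zero_or_pos n with h | h
  · subst h; simp [frobSq]
  have hn : (0:ℝ) < n := by exact_mod_cast h
  rw [frobSq_eq_col, frobSq_eq_col]
  apply Finset.sum_le_sum
  intro j _
  have hc : (∑ i, M i j) ^ 2 ≤ n * ∑ i, (M i j) ^ 2 := by
    simpa using sq_sum_le_card_mul_sum_sq (s := Finset.univ) (f := fun i => M i j)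
  calc ∑ i : Fin n, ((rowAvg M) i j) ^ 2
      = n * ((n:ℝ)⁻¹ ^ 2 * (∑ k, M k j) ^ 2) := by
        simp [rowAvg, Finset.sum_const, mul_pow]
    _ ≤ n * ((n:ℝ)⁻¹ ^ 2 * (n * ∑ i, (M i j) ^ 2)) := by
        apply mul_le_mul_of_nonneg_left _ hn.le
        apply mul_le_mul_of_nonneg_left hc (by positivity)
    _ = ∑ i, (M i j) ^ 2 := by
        field_simp

lemma key_identity {n m : ℕ} (hn : 0 < n) (W : Matrix (Fin n) (Fin n) ℝ)
    (hWrow : ∀ i, ∑ j, W i j = 1) (hWcol : ∀ j, ∑ i, W i j = 1) (η : ℝ)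
    (x y xt : Matrix (Fin n) (Fin m) ℝ) :
    ((1 - η • (1 - W)) * x - η • y + η • ((1 - W) * (x - xt))) -
      rowAvg ((1 - η • (1 - W)) * x - η • y + η • ((1 - W) * (x - xt))) =
    ((1 : Matrix (Fin n) (Fin n) ℝ) - η • (1 - W) - Matrix.of fun _ _ => (n : ℝ)⁻¹)
        * (x - rowAvg x)
      + (η • ((1 - W) * (x - xt)) - η • (y - rowAvg y)) := by
  have hnR : ((n:ℝ)) ≠ 0 := by positivity
  set J : Matrix (Fin n) (Fin n) ℝ := Matrix.of fun _ _ => (n : ℝ)⁻¹ with hJdef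
  have hJ : ∀ M : Matrix (Fin n) (Fin m) ℝ, rowAvg M = J * M := by
    intro M
    ext i j
    simp [rowAvg, hJdef, Matrix.mul_apply, Finset.mul_sum]
  have hJU : J * (1 - W) = 0 := by
    ext i j
    simp [hJdef, Matrix.mul_apply, Matrix.sub_apply, Matrix.one_apply, mul_sub,
      Finset.sum_sub_distrib, ← Finset.mul_sum, hWcol j]
  have hUJ : (1 - W) * J = 0 := by
    ext i j
    simp [hJdef, Matrix.mul_apply, Matrix.sub_apply, Matrix.one_apply, sub_mul,
      Finset.sum_sub_distrib, ← Finset.sum_mul, hWrow i]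
  have hJJ : J * J = J := by
    ext i j
    simp [hJdef, Matrix.mul_apply, Finset.sum_const]
    field_simp
  have hJW : J * W = J := by
    have := hJU; rw [Matrix.mul_sub, Matrix.mul_one, sub_eq_zero] at this; exact this.symm
  have hWJ : W * J = J := by
    have := hUJ; rw [Matrix.sub_mul, Matrix.one_mul, sub_eq_zero] at this; exact this.symm
  have hJW' : ∀ z : Matrix (Fin n) (Fin m) ℝ, J * (W * z) = J * z := by
    intro z; rw [← Matrix.mul_assoc, hJW]
  have hWJ' : ∀ z : Matrix (Fin n) (Fin m) ℝ, W * (J * z) = J * z := by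
    intro z; rw [← Matrix.mul_assoc, hWJ]
  have hJJ' : ∀ z : Matrix (Fin n) (Fin m) ℝ, J * (J * z) = J * z := by
    intro z; rw [← Matrix.mul_assoc, hJJ]
  rw [hJ, hJ, hJ]
  simp only [Matrix.sub_mul, Matrix.add_mul, Matrix.mul_sub, Matrix.mul_add,
    Matrix.one_mul, Matrix.smul_mul, Matrix.mul_smul, smul_sub, smul_add,
    hJW', hWJ', hJJ', smul_zero, sub_zero, zero_sub]
  abel

lemma measurable_frobSq {n m : ℕ} {Ω : Type*} [MeasurableSpace Ω]
    (f : Ω → Matrix (Fin n) (Fin m) ℝ) (hf : ∀ i j, Measurable fun ω => f ω i j) :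
    Measurable fun ω => frobSq (f ω) := by
  unfold frobSq
  apply Finset.measurable_sum; intro i _
  apply Finset.measurable_sum; intro j _
  exact (hf i j).pow_const 2

lemma integrable_of_bound {Ω : Type*} [MeasurableSpace Ω] {P : Measure Ω} {f g : Ω → ℝ}
    (hf : Measurable f) (hfnn : ∀ ω, 0 ≤ f ω) (hg : Integrable g P) (h : ∀ ω, f ω ≤ g ω) :
    Integrable f P :=
  hg.mono' hf.aestronglyMeasurable
    (ae_of_all _ fun ω => by rw [Real.norm_of_nonneg (hfnn ω)]; exact h ω)

/-- Consensus contraction of the compressed decision-variable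
update: with `W_η = I − η(I − W)`, `ρ_η = ‖W_η − (1/n)𝟙𝟙ᵀ‖ ∈ (0,1)`,
`w₁ = 1 + ρ_η²`, `w₂ = 1 − ρ_η²`, compression error
`E‖X − X̃‖² ≤ ω E‖X − H‖²`, and `X⁺ = W_η X − η Y + η (I − W)(X − X̃)`:
`E‖X⁺ − X̄⁺‖² ≤ (w₁/2) E‖X − X̄‖² + (2w₁η²/w₂) E‖Y − Ȳ‖² + (8η²ωw₁/w₂) E‖X − H‖²`. -/
theorem statement10 {n m : ℕ} (hn : 0 < n)
    {Ω : Type*} [MeasurableSpace Ω] (P : Measure Ω) [IsProbabilityMeasure P]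
    (W : Matrix (Fin n) (Fin n) ℝ)
    (hWnn : ∀ i j, 0 ≤ W i j) (hWsymm : W.transpose = W)
    (hWrow : ∀ i, ∑ j, W i j = 1)
    (η : ℝ) (hη : 0 < η)
    (ρη : ℝ)
    (hρη : ρη = specNorm ((1 : Matrix (Fin n) (Fin n) ℝ) - η • (1 - W) -
      Matrix.of fun _ _ => (n : ℝ)⁻¹))
    (hρ0 : 0 < ρη) (hρ1 : ρη < 1)
    (ωc : ℝ) (hωc : 0 ≤ ωc)
    (X Y H Xtil : Ω → Matrix (Fin n) (Fin m) ℝ)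
    (hXmeas : ∀ i j, Measurable fun ω => X ω i j)
    (hYmeas : ∀ i j, Measurable fun ω => Y ω i j)
    (hHmeas : ∀ i j, Measurable fun ω => H ω i j)
    (hXtmeas : ∀ i j, Measurable fun ω => Xtil ω i j)
    (hXint : Integrable (fun ω => frobSq (X ω)) P)
    (hYint : Integrable (fun ω => frobSq (Y ω)) P)
    (hHint : Integrable (fun ω => frobSq (H ω)) P)
    (hXtint : Integrable (fun ω => frobSq (Xtil ω)) P)
    (hcomp : ∫ ω, frobSq (X ω - Xtil ω) ∂P ≤ ωc * ∫ ω, frobSq (X ω - H ω) ∂P)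
    (Xp : Ω → Matrix (Fin n) (Fin m) ℝ)
    (hXp : ∀ ω, Xp ω = (1 - η • (1 - W)) * X ω - η • Y ω +
      η • ((1 - W) * (X ω - Xtil ω))) :
    ∫ ω, frobSq (Xp ω - rowAvg (Xp ω)) ∂P ≤
      (1 + ρη ^ 2) / 2 * ∫ ω, frobSq (X ω - rowAvg (X ω)) ∂P +
        2 * (1 + ρη ^ 2) * η ^ 2 / (1 - ρη ^ 2) *
          ∫ ω, frobSq (Y ω - rowAvg (Y ω)) ∂P +
        8 * η ^ 2 * ωc * (1 + ρη ^ 2) / (1 - ρη ^ 2) *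
          ∫ ω, frobSq (X ω - H ω) ∂P := by
  have hWcol : ∀ j, ∑ i, W i j = 1 := by
    intro j
    have : ∀ i, W i j = W j i := fun i => by
      conv_lhs => rw [← hWsymm]
      rfl
    rw [Finset.sum_congr rfl fun i _ => this i]
    exact hWrow j
  have hρsq : ρη ^ 2 < 1 := by nlinarith
  have h1m : 0 < 1 - ρη ^ 2 := by linarith
  set c1 : ℝ := (1 + ρη ^ 2) / 2 with hc1
  set c2 : ℝ := 2 * (1 + ρη ^ 2) * η ^ 2 / (1 - ρη ^ 2) with hc2
  set c3 : ℝ := 8 * (1 + ρη ^ 2) * η ^ 2 / (1 - ρη ^ 2) with hc3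
  set β : ℝ := (1 - ρη ^ 2) / (2 * ρη ^ 2) with hβdef
  have hβ : 0 < β := by positivity
  have hβ1 : (1 + β) * ρη ^ 2 = c1 := by
    rw [hβdef, hc1]; field_simp; ring
  have hβinv : 1 + β⁻¹ = (1 + ρη ^ 2) / (1 - ρη ^ 2) := by
    have hρne : ρη ^ 2 ≠ 0 := by positivity
    rw [hβdef, inv_div]
    field_simp
    ring
  -- pointwise bound
  have hpt : ∀ ω, frobSq (Xp ω - rowAvg (Xp ω)) ≤
      c1 * frobSq (X ω - rowAvg (X ω)) + c2 * frobSq (Y ω - rowAvg (Y ω)) +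
        c3 * frobSq (X ω - Xtil ω) := by
    intro ω
    set x := X ω; set y := Y ω; set xt := Xtil ω
    have hid := key_identity hn W hWrow hWcol η x y xt
    rw [hXp ω]
    rw [hid]
    set A : Matrix (Fin n) (Fin n) ℝ :=
      (1 : Matrix (Fin n) (Fin n) ℝ) - η • (1 - W) - Matrix.of fun _ _ => (n : ℝ)⁻¹ with hA
    set B : Matrix (Fin n) (Fin m) ℝ :=
      η • ((1 - W) * (x - xt)) - η • (y - rowAvg y) with hB
    have step1 : frobSq (A * (x - rowAvg x) + B) ≤
        (1 + β) * frobSq (A * (x - rowAvg x)) + (1 + β⁻¹) * frobSq B :=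
      frobSq_add_le _ _ hβ
    have step2 : frobSq (A * (x - rowAvg x)) ≤ ρη ^ 2 * frobSq (x - rowAvg x) := by
      have := frobSq_mul_le A (x - rowAvg x)
      rwa [← hρη] at this
    have step3 : frobSq B ≤ 8 * η ^ 2 * frobSq (x - xt) +
        2 * η ^ 2 * frobSq (y - rowAvg y) := by
      have h1 := frobSq_sub_le_two (η • ((1 - W) * (x - xt))) (η • (y - rowAvg y))
      rw [frobSq_smul, frobSq_smul] at h1
      have h2 := frobSq_oneSubW_mul_le W hWnn hWrow hWcol (x - xt)
      nlinarith [sq_nonneg η]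
    have hβinv_nn : 0 ≤ 1 + β⁻¹ := by positivity
    calc frobSq (A * (x - rowAvg x) + B)
        ≤ (1 + β) * (ρη ^ 2 * frobSq (x - rowAvg x)) + (1 + β⁻¹) * frobSq B := by
          refine step1.trans ?_
          gcongr
      _ ≤ (1 + β) * (ρη ^ 2 * frobSq (x - rowAvg x)) +
            (1 + β⁻¹) * (8 * η ^ 2 * frobSq (x - xt) + 2 * η ^ 2 * frobSq (y - rowAvg y)) := by
          gcongr
      _ = c1 * frobSq (x - rowAvg x) + c2 * frobSq (y - rowAvg y) + c3 * frobSq (x - xt) := by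
          rw [← mul_assoc, hβ1, hβinv, hc2, hc3]
          field_simp
          ring
  -- integrability
  have meas_sub_rowAvg : ∀ (Z : Ω → Matrix (Fin n) (Fin m) ℝ),
      (∀ i j, Measurable fun ω => Z ω i j) →
      Measurable fun ω => frobSq (Z ω - rowAvg (Z ω)) := by
    intro Z hZ
    apply measurable_frobSq
    intro i j
    simp only [Matrix.sub_apply, rowAvg, Matrix.of_apply]
    exact (hZ i j).sub (measurable_const.mul (Finset.measurable_sum _ fun k _ => hZ k j))
  have bound_sub_rowAvg : ∀ (M : Matrix (Fin n) (Fin m) ℝ),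
      frobSq (M - rowAvg M) ≤ 4 * frobSq M := by
    intro M
    have h1 := frobSq_sub_le_two M (rowAvg M)
    have h2 := frobSq_rowAvg_le M
    linarith
  have i1 : Integrable (fun ω => frobSq (X ω - rowAvg (X ω))) P :=
    integrable_of_bound (meas_sub_rowAvg X hXmeas) (fun ω => frobSq_nonneg _)
      (hXint.const_mul 4) (fun ω => bound_sub_rowAvg _)
  have i2 : Integrable (fun ω => frobSq (Y ω - rowAvg (Y ω))) P :=
    integrable_of_bound (meas_sub_rowAvg Y hYmeas) (fun ω => frobSq_nonneg _)
      (hYint.const_mul 4) (fun ω => bound_sub_rowAvg _)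
  have i3 : Integrable (fun ω => frobSq (X ω - Xtil ω)) P := by
    refine integrable_of_bound ?_ (fun ω => frobSq_nonneg _)
      (((hXint.const_mul 2).add (hXtint.const_mul 2))) (fun ω => frobSq_sub_le_two _ _)
    apply measurable_frobSq
    intro i j
    exact ((hXmeas i j).sub (hXtmeas i j))
  have j1 : Integrable (fun ω => c1 * frobSq (X ω - rowAvg (X ω))) P := i1.const_mul c1
  have j2 : Integrable (fun ω => c2 * frobSq (Y ω - rowAvg (Y ω))) P := i2.const_mul c2
  have j3 : Integrable (fun ω => c3 * frobSq (X ω - Xtil ω)) P := i3.const_mul c3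
  have j12 : Integrable (fun ω => c1 * frobSq (X ω - rowAvg (X ω)) +
      c2 * frobSq (Y ω - rowAvg (Y ω))) P := j1.add j2
  have hint : ∫ ω, frobSq (Xp ω - rowAvg (Xp ω)) ∂P ≤
      ∫ ω, (c1 * frobSq (X ω - rowAvg (X ω)) + c2 * frobSq (Y ω - rowAvg (Y ω)) +
        c3 * frobSq (X ω - Xtil ω)) ∂P := by
    apply integral_mono_of_nonneg
    · exact ae_of_all _ fun ω => frobSq_nonneg _
    · exact j12.add j3
    · exact ae_of_all _ hpt
  have hsplit : ∫ ω, (c1 * frobSq (X ω - rowAvg (X ω)) + c2 * frobSq (Y ω - rowAvg (Y ω)) +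
        c3 * frobSq (X ω - Xtil ω)) ∂P =
      c1 * ∫ ω, frobSq (X ω - rowAvg (X ω)) ∂P + c2 * ∫ ω, frobSq (Y ω - rowAvg (Y ω)) ∂P +
        c3 * ∫ ω, frobSq (X ω - Xtil ω) ∂P := by
    rw [integral_add j12 j3, integral_add j1 j2,
      integral_const_mul, integral_const_mul, integral_const_mul]
  have hc3nn : 0 ≤ c3 := by positivity
  have hlast : c3 * ∫ ω, frobSq (X ω - Xtil ω) ∂P ≤
      8 * η ^ 2 * ωc * (1 + ρη ^ 2) / (1 - ρη ^ 2) * ∫ ω, frobSq (X ω - H ω) ∂P := by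
    have := mul_le_mul_of_nonneg_left hcomp hc3nn
    refine this.trans_eq ?_
    rw [hc3]; ring
  calc ∫ ω, frobSq (Xp ω - rowAvg (Xp ω)) ∂P
      ≤ c1 * ∫ ω, frobSq (X ω - rowAvg (X ω)) ∂P + c2 * ∫ ω, frobSq (Y ω - rowAvg (Y ω)) ∂P +
        c3 * ∫ ω, frobSq (X ω - Xtil ω) ∂P := by rw [← hsplit]; exact hint
    _ ≤ _ := by
        rw [hc1, hc2]
        linarith
end

section
/- Let L, μ > 0, let m, n ≥ 1 be integers, let ω ∈ [0,1], r ∈ (0,1), τ_x, τ_y > 1 and α_x, α_y ∈ (0,1), and assume b_x := τ_x(1 − α_x(1 − ω)) < 1 and b_y := τ_y(1 − α_y(1 − ω)) < 1. Set w₁ := 1 + r², w₂ := 1 − r², a_x := (12τ_x/(τ_x − 1))·(1/12 + L²(8m + 33)), a_y := 3τ_y/(τ_y − 1), c₁ := (30(m+4)L²w₁ + 2w₁)/w₂, c₂ := (96w₁w₂L² + 16(m+4)w₁²)/w₂², c₃ := 20nL²(m+4)w₁/w₂, c₄ := (64w₁²(m+4) + 96w₁w₂)·L²ω/w₂², c₅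 := (L/(4n))·((4m+5)/√(m+4) + (4m+4)L/μ), c₆ := ((15(m+4)L² + 1)/6)·a_y, c₇ := ((w₁ + w₂)/w₂)·a_y, c₈ := (5nL²(m+4)/3)·a_y. For η > 0 let G(η) be the 5×5 matrix with row 1 = (w₁/2, 2w₁η²/w₂, 0, 8ωw₁η²/w₂, 0), row 2 = (c₁, w₁/2 + c₂η², c₃, c₄η², 8w₁ωη²/w₂), row 3 = (c₅η, 0, 1 − 2μη/3, 0, 0), row 4 = (2a_x, a_xη², n·a_x, b_x + a_xωη², 0), row 5 = (c₆, c₇, c₈, c₇ω, b_y + a_yωη). Then there exists η* > 0 such that for every η ∈ (0, η*], the spectral radius of G(η) satisfies 0 < ρ(G(η)) < 1. -/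
open scoped ENNReal

/-- Spectral radius of a real square matrix: the maximum modulus of its (complex)
eigenvalues, obtained as the spectral radius of the complexified matrix. -/
noncomputable def specRad {d : ℕ} (M : Matrix (Fin d) (Fin d) ℝ) : ℝ≥0∞ :=
  spectralRadius ℂ (M.map Complex.ofReal)

section Aux

open scoped NNReal

attribute [local instance] Matrix.linftyOpNormedRing Matrix.linftyOpNormedAlgebra

lemma specRad_pos_of_det_ne_zero {d : ℕ} (hd : 0 < d) (M : Matrix (Fin d) (Fin d) ℝ)
    (h : M.det ≠ 0) : 0 < specRad M := by
  haveI : NeZero d := ⟨hd.ne'⟩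
  set A := M.map Complex.ofReal with hA
  have hdet : A.det ≠ 0 := by
    have : A.det = (M.det : ℂ) := by
      rw [hA]
      exact (RingHom.map_det Complex.ofRealHom M).symm
    simp [this, h]
  have hunit : IsUnit A := (Matrix.isUnit_iff_isUnit_det A).2 (isUnit_iff_ne_zero.2 hdet)
  obtain ⟨k, hk⟩ := spectrum.nonempty A
  have hk0 : k ≠ 0 := by
    rintro rfl
    exact (spectrum.zero_mem_iff ℂ).1 hk hunit
  have hle : (‖k‖₊ : ℝ≥0∞) ≤ specRad M :=
    le_iSup₂ (f := fun k (_ : k ∈ spectrum ℂ A) => (‖k‖₊ : ℝ≥0∞)) k hk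
  refine lt_of_lt_of_le ?_ hle
  simpa using hk0

lemma specRad_lt_one_of_rows {d : ℕ} (hd : 0 < d) (M : Matrix (Fin d) (Fin d) ℝ)
    (w : Fin d → ℝ) (hw : ∀ i, 0 < w i) (hM : ∀ i j, 0 ≤ M i j)
    (h : ∀ i, (∑ j, M i j * w j) < w i) :
    specRad M < 1 := by
  haveI : NeZero d := ⟨hd.ne'⟩
  set A := M.map Complex.ofReal with hA
  have hwne : ∀ i, (w i : ℂ) ≠ 0 := fun i => by
    exact_mod_cast (hw i).ne'
  set u : (Matrix (Fin d) (Fin d) ℂ)ˣ :=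
    { val := Matrix.diagonal fun i => (w i : ℂ)
      inv := Matrix.diagonal fun i => ((w i : ℂ))⁻¹
      val_inv := by
        rw [Matrix.diagonal_mul_diagonal]
        simp [mul_inv_cancel₀, hwne]
      inv_val := by
        rw [Matrix.diagonal_mul_diagonal]
        simp [inv_mul_cancel₀, hwne] } with hu
  have hspec : spectrum ℂ A = spectrum ℂ ((u⁻¹ : _ˣ) * A * u) :=
    (spectrum.units_conjugate' (a := A) (u := u)).symm
  have hrad : specRad M = spectralRadius ℂ ((u⁻¹ : _ˣ) * A * u) := by
    unfold specRad spectralRadius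
    rw [← hA, hspec]
  rw [hrad]
  refine lt_of_le_of_lt (spectrum.spectralRadius_le_nnnorm (𝕜 := ℂ) _) ?_
  rw [← ENNReal.coe_one, ENNReal.coe_lt_coe]
  have hB : ((u⁻¹ : _ˣ) : Matrix (Fin d) (Fin d) ℂ) * A * u =
      Matrix.of fun i j => ((w i) : ℂ)⁻¹ * A i j * (w j) := by
    ext i j
    simp [hu, Matrix.mul_apply, Matrix.diagonal, Finset.sum_ite_eq, Finset.sum_ite_eq']
  rw [hB]
  rw [Matrix.linfty_opNNNorm_def (α := ℂ) (Matrix.of fun i j => ((w i) : ℂ)⁻¹ * A i j * (w j))]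
  rw [Finset.sup_lt_iff (show (⊥:ℝ≥0) < 1 by norm_num)]
  intro i _
  have key : ∀ j, ‖(Matrix.of fun i j => ((w i) : ℂ)⁻¹ * A i j * (w j)) i j‖₊
      = ‖(w i)⁻¹ * |M i j| * w j‖₊ := by
    intro j
    simp only [Matrix.of_apply, hA, Matrix.map_apply]
    rw [show ((w i : ℂ))⁻¹ * (M i j : ℂ) * (w j : ℂ)
        = (((w i)⁻¹ * M i j * w j : ℝ) : ℂ) by push_cast; ring]
    rw [Complex.nnnorm_real]
    rw [← Real.nnnorm_abs ((w i)⁻¹ * M i j * w j),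
      ← Real.nnnorm_abs ((w i)⁻¹ * |M i j| * w j)]
    congr 1
    rw [abs_mul, abs_mul, abs_mul, abs_mul, abs_abs]
  simp_rw [key]
  have hcast : ((∑ j, ‖(w i)⁻¹ * |M i j| * w j‖₊ : ℝ≥0) : ℝ) < 1 := by
    push_cast
    calc (∑ j, ‖(w i)⁻¹ * |M i j| * w j‖)
        = ∑ j, (w i)⁻¹ * (M i j * w j) := by
          refine Finset.sum_congr rfl fun j _ => ?_
          rw [Real.norm_eq_abs,
            abs_of_nonneg (mul_nonneg (mul_nonneg (inv_nonneg.2 (hw i).le)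
              (abs_nonneg _)) (hw j).le), abs_of_nonneg (hM i j)]
          ring
      _ = (w i)⁻¹ * ∑ j, M i j * w j := by rw [Finset.mul_sum]
      _ < (w i)⁻¹ * w i := by
          exact mul_lt_mul_of_pos_left (h i) (inv_pos.2 (hw i))
      _ = 1 := inv_mul_cancel₀ (hw i).ne'
  exact_mod_cast hcast

end Aux

set_option maxHeartbeats 1000000 in
/-- For the 5×5 coefficient matrix `G(η)` of the OCGT-BF error
system, there exists `η* > 0` such that `0 < ρ(G(η)) < 1` for every `η ∈ (0, η*]`. -/
theorem statement15 (L μ : ℝ) (hL : 0 < L) (hμ : 0 < μ)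
    (m n : ℕ) (hm : 1 ≤ m) (hn : 1 ≤ n)
    (ωc : ℝ) (hωc0 : 0 ≤ ωc) (hωc1 : ωc ≤ 1)
    (r : ℝ) (hr0 : 0 < r) (hr1 : r < 1)
    (τx τy : ℝ) (hτx : 1 < τx) (hτy : 1 < τy)
    (αx αy : ℝ) (hαx0 : 0 < αx) (hαx1 : αx < 1) (hαy0 : 0 < αy) (hαy1 : αy < 1)
    (bx bY : ℝ) (hbx : bx = τx * (1 - αx * (1 - ωc)))
    (hbY : bY = τy * (1 - αy * (1 - ωc)))
    (hbx1 : bx < 1) (hbY1 : bY < 1)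
    (w1 w2 ax ay c1 c2 c3 c4 c5 c6 c7 c8 : ℝ)
    (hw1 : w1 = 1 + r ^ 2) (hw2 : w2 = 1 - r ^ 2)
    (hax : ax = 12 * τx / (τx - 1) * (1 / 12 + L ^ 2 * (8 * (m : ℝ) + 33)))
    (hay : ay = 3 * τy / (τy - 1))
    (hc1 : c1 = (30 * ((m : ℝ) + 4) * L ^ 2 * w1 + 2 * w1) / w2)
    (hc2 : c2 = (96 * w1 * w2 * L ^ 2 + 16 * ((m : ℝ) + 4) * w1 ^ 2) / w2 ^ 2)
    (hc3 : c3 = 20 * (n : ℝ) * L ^ 2 * ((m : ℝ) + 4) * w1 / w2)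
    (hc4 : c4 = (64 * w1 ^ 2 * ((m : ℝ) + 4) + 96 * w1 * w2) * L ^ 2 * ωc / w2 ^ 2)
    (hc5 : c5 = L / (4 * (n : ℝ)) *
      ((4 * (m : ℝ) + 5) / Real.sqrt ((m : ℝ) + 4) + (4 * (m : ℝ) + 4) * L / μ))
    (hc6 : c6 = (15 * ((m : ℝ) + 4) * L ^ 2 + 1) / 6 * ay)
    (hc7 : c7 = (w1 + w2) / w2 * ay)
    (hc8 : c8 = 5 * (n : ℝ) * L ^ 2 * ((m : ℝ) + 4) / 3 * ay)
    (G : ℝ → Matrix (Fin 5) (Fin 5) ℝ)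
    (hG : ∀ η, G η =
      !![w1 / 2, 2 * w1 * η ^ 2 / w2, 0, 8 * ωc * w1 * η ^ 2 / w2, 0;
         c1, w1 / 2 + c2 * η ^ 2, c3, c4 * η ^ 2, 8 * w1 * ωc * η ^ 2 / w2;
         c5 * η, 0, 1 - 2 * μ * η / 3, 0, 0;
         2 * ax, ax * η ^ 2, (n : ℝ) * ax, bx + ax * ωc * η ^ 2, 0;
         c6, c7, c8, c7 * ωc, bY + ay * ωc * η]) :
    ∃ ηstar : ℝ, 0 < ηstar ∧ ∀ η : ℝ, 0 < η → η ≤ ηstar →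
      0 < specRad (G η) ∧ specRad (G η) < 1 := by
  -- basic facts
  have hm' : (1:ℝ) ≤ (m:ℝ) := by exact_mod_cast hm
  have hn' : (1:ℝ) ≤ (n:ℝ) := by exact_mod_cast hn
  have hnn : (0:ℝ) < (n:ℝ) := by linarith only [hn']
  have hL2 : 0 < L ^ 2 := pow_pos hL 2
  have hr2 : r ^ 2 < 1 := by
    calc r ^ 2 < 1 ^ 2 := by
          refine pow_lt_pow_left₀ hr1 hr0.le (by norm_num)
      _ = 1 := one_pow 2
  have hw2p : 0 < w2 := by rw [hw2]; linarith only [hr2]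
  have hw1p : 0 < w1 := by rw [hw1]; positivity
  have hw1lt : w1 < 2 := by rw [hw1]; linarith only [hr2]
  have h1w : 0 < 1 - w1 / 2 := by linarith only [hw1lt]
  have hm4 : (0:ℝ) < (m:ℝ) + 4 := by positivity
  have haxp : 0 < ax := by
    rw [hax]
    exact mul_pos (div_pos (by linarith only [hτx]) (by linarith only [hτx]))
      (by positivity)
  have hayp : 0 < ay := by
    rw [hay]
    exact div_pos (by linarith only [hτy]) (by linarith only [hτy])
  have hc1p : 0 < c1 := by
    rw [hc1]
    refine div_pos ?_ hw2p
    have h1 : 0 < 30 * ((m:ℝ) + 4) * L ^ 2 * w1 :=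
      mul_pos (by positivity) hw1p
    linarith only [h1, hw1p]
  have hc2p : 0 < c2 := by
    rw [hc2]
    refine div_pos ?_ (by positivity)
    have h1 : 0 < 96 * w1 * w2 * L ^ 2 := mul_pos (mul_pos (mul_pos (by norm_num) hw1p) hw2p) hL2
    have h2 : 0 < 16 * ((m:ℝ) + 4) * w1 ^ 2 := mul_pos (by positivity) (pow_pos hw1p 2)
    linarith only [h1, h2]
  have hc3p : 0 < c3 := by
    rw [hc3]
    exact div_pos (mul_pos (by positivity) hw1p) hw2p
  have hc4n : 0 ≤ c4 := by
    rw [hc4]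
    refine div_nonneg ?_ (by positivity)
    refine mul_nonneg (mul_nonneg ?_ hL2.le) hωc0
    have h1 : (0:ℝ) ≤ 64 * w1 ^ 2 * ((m:ℝ) + 4) := by positivity
    have h2 : (0:ℝ) ≤ 96 * w1 * w2 := mul_nonneg (mul_nonneg (by norm_num) hw1p.le) hw2p.le
    linarith only [h1, h2]
  have hc5p : 0 < c5 := by
    rw [hc5]
    refine mul_pos (div_pos hL (by positivity)) (add_pos ?_ ?_)
    · exact div_pos (by positivity) (Real.sqrt_pos.2 (by positivity))
    · exact div_pos (by positivity) hμ
  have hc6p : 0 < c6 := by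
    rw [hc6]
    exact mul_pos (by positivity) hayp
  have hc7p : 0 < c7 := by
    rw [hc7]
    refine mul_pos (div_pos (by linarith only [hw1p, hw2p]) hw2p) hayp
  have hc8p : 0 < c8 := by
    rw [hc8]
    exact mul_pos (by positivity) hayp
  have hbxp : 0 < bx := by
    rw [hbx]
    refine mul_pos (by linarith only [hτx]) ?_
    have h1 : αx * (1 - ωc) ≤ αx := mul_le_of_le_one_right hαx0.le (by linarith only [hωc0])
    linarith only [h1, hαx1]
  have hbYp : 0 < bY := by
    rw [hbY]
    refine mul_pos (by linarith only [hτy]) ?_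
    have h1 : αy * (1 - ωc) ≤ αy := mul_le_of_le_one_right hαy0.le (by linarith only [hωc0])
    linarith only [h1, hαy1]
  -- determinant is continuous and positive near 0
  have hGcont : Continuous fun η => (G η).det := by
    refine Continuous.matrix_det (continuous_matrix ?_)
    intro i j
    simp only [hG]
    fin_cases i <;> fin_cases j <;> simp <;> fun_prop
  have hdet0 : 0 < (G 0).det := by
    have hval : (G 0).det = w1 / 2 * (w1 / 2) * bx * bY := by
      rw [hG 0]
      simp [Matrix.det_succ_row_zero, Fin.sum_univ_succ,
        (by decide : Fin.succAbove (1 : Fin 4) (2 : Fin 3) = 3)]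
      ring
    rw [hval]
    exact mul_pos (mul_pos (mul_pos (by linarith only [hw1p]) (by linarith only [hw1p]))
      hbxp) hbYp
  have hδex : ∃ δ > 0, ∀ η : ℝ, |η| < δ → 0 < (G η).det := by
    have h1 : (fun η => (G η).det) ⁻¹' Set.Ioi 0 ∈ nhds (0:ℝ) :=
      hGcont.continuousAt.preimage_mem_nhds (Ioi_mem_nhds hdet0)
    rw [Metric.mem_nhds_iff] at h1
    obtain ⟨δ, hδ0, hδb⟩ := h1
    refine ⟨δ, hδ0, fun η hη => ?_⟩
    have hmem : η ∈ Metric.ball (0:ℝ) δ := by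
      simpa [Metric.mem_ball, Real.dist_eq] using hη
    exact hδb hmem
  obtain ⟨δ, hδ0, hδ⟩ := hδex
  -- choice of ε
  set ε : ℝ := min 1 (min (μ / (3 * c5)) (min ((1 - w1 / 2) / (2 * (c1 + c3)))
      (min ((1 - bx) / (2 * (ax * ((n : ℝ) + 2)))) ((1 - bY) / (2 * (c6 + c8 + 2 * c7))))))
    with hεdef
  have hax2 : (0:ℝ) < 2 * (ax * ((n : ℝ) + 2)) :=
    mul_pos (by norm_num) (mul_pos haxp (by positivity))
  have hq1 : 0 < μ / (3 * c5) := div_pos hμ (by linarith only [hc5p])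
  have hq2 : 0 < (1 - w1 / 2) / (2 * (c1 + c3)) :=
    div_pos h1w (by linarith only [hc1p, hc3p])
  have hq3 : 0 < (1 - bx) / (2 * (ax * ((n : ℝ) + 2))) :=
    div_pos (by linarith only [hbx1]) hax2
  have hq4 : 0 < (1 - bY) / (2 * (c6 + c8 + 2 * c7)) :=
    div_pos (by linarith only [hbY1]) (by linarith only [hc6p, hc7p, hc8p])
  have hε0 : 0 < ε := by
    rw [hεdef]
    exact lt_min one_pos (lt_min hq1 (lt_min hq2 (lt_min hq3 hq4)))
  have hε1 : ε ≤ 1 := min_le_left _ _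
  have hεq1 : ε ≤ μ / (3 * c5) := (min_le_right _ _).trans (min_le_left _ _)
  have hεq2 : ε ≤ (1 - w1 / 2) / (2 * (c1 + c3)) :=
    (min_le_right _ _).trans ((min_le_right _ _).trans (min_le_left _ _))
  have hεq3 : ε ≤ (1 - bx) / (2 * (ax * ((n : ℝ) + 2))) :=
    (min_le_right _ _).trans ((min_le_right _ _).trans
      ((min_le_right _ _).trans (min_le_left _ _)))
  have hεq4 : ε ≤ (1 - bY) / (2 * (c6 + c8 + 2 * c7)) :=
    (min_le_right _ _).trans ((min_le_right _ _).trans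
      ((min_le_right _ _).trans (min_le_right _ _)))
  have hE2 : c5 * ε ≤ μ / 3 := by
    rw [le_div_iff₀ (by linarith only [hc5p] : (0:ℝ) < 3 * c5)] at hεq1
    linarith only [hεq1]
  have hE3 : (c1 + c3) * ε ≤ (1 - w1 / 2) / 2 := by
    rw [le_div_iff₀ (by linarith only [hc1p, hc3p] : (0:ℝ) < 2 * (c1 + c3))] at hεq2
    linarith only [hεq2]
  have hE4 : ax * ((n : ℝ) + 2) * ε ≤ (1 - bx) / 2 := by
    rw [le_div_iff₀ hax2] at hεq3
    linarith only [hεq3]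
  have hE5 : (c6 + c8 + 2 * c7) * ε ≤ (1 - bY) / 2 := by
    rw [le_div_iff₀ (by linarith only [hc6p, hc7p, hc8p] :
      (0:ℝ) < 2 * (c6 + c8 + 2 * c7))] at hεq4
    linarith only [hεq4]
  have hε21 : ε ^ 2 ≤ ε := by
    have h1 := mul_le_mul_of_nonneg_right hε1 hε0.le
    linarith only [h1]
  have hε32 : ε ^ 3 ≤ ε ^ 2 := by
    have h1 := mul_le_mul_of_nonneg_right hε1 (sq_nonneg ε)
    linarith only [h1]
  have hε31 : ε ^ 3 ≤ ε := by linarith only [hε21, hε32]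
  -- choice of ηstar
  set K1 : ℝ := (1 - w1 / 2) * w2 / (20 * w1) with hK1def
  set K4 : ℝ := (1 - w1 / 2) / (8 * (c2 + c4 + 1)) with hK4def
  set K5 : ℝ := ε * (1 - w1 / 2) * w2 / (64 * w1) with hK5def
  set K6 : ℝ := (1 - bx) / (8 * ax) with hK6def
  have hK1p : 0 < K1 := by
    rw [hK1def]; exact div_pos (mul_pos h1w hw2p) (by linarith only [hw1p])
  have hK4p : 0 < K4 := by
    rw [hK4def]; exact div_pos h1w (by linarith only [hc2p, hc4n])
  have hK5p : 0 < K5 := by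
    rw [hK5def]
    exact div_pos (mul_pos (mul_pos hε0 h1w) hw2p) (by linarith only [hw1p])
  have hK6p : 0 < K6 := by
    rw [hK6def]; exact div_pos (by linarith only [hbx1]) (by linarith only [haxp])
  refine ⟨min (δ / 2) (min ε (min (3 / (2 * μ)) (min (ε * Real.sqrt K1)
      (min (Real.sqrt K4) (min (Real.sqrt K5)
        (min (Real.sqrt K6) ((1 - bY) / (4 * (ay + 1))))))))), ?_, ?_⟩
  · refine lt_min (by linarith only [hδ0]) (lt_min hε0 (lt_min (by positivity)
      (lt_min (mul_pos hε0 (Real.sqrt_pos.2 hK1p))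
        (lt_min (Real.sqrt_pos.2 hK4p) (lt_min (Real.sqrt_pos.2 hK5p)
          (lt_min (Real.sqrt_pos.2 hK6p)
            (div_pos (by linarith only [hbY1]) (by linarith only [hayp]))))))))
  intro η hη0 hηle
  -- extract the individual bounds on η
  have hηδ : η ≤ δ / 2 := hηle.trans (min_le_left _ _)
  have hηε : η ≤ ε := hηle.trans ((min_le_right _ _).trans (min_le_left _ _))
  have hημ : η ≤ 3 / (2 * μ) := hηle.trans ((min_le_right _ _).trans
    ((min_le_right _ _).trans (min_le_left _ _)))
  have hηK1 : η ≤ ε * Real.sqrt K1 := hηle.trans ((min_le_right _ _).trans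
    ((min_le_right _ _).trans ((min_le_right _ _).trans (min_le_left _ _))))
  have hηK4 : η ≤ Real.sqrt K4 := hηle.trans ((min_le_right _ _).trans
    ((min_le_right _ _).trans ((min_le_right _ _).trans
      ((min_le_right _ _).trans (min_le_left _ _)))))
  have hηK5 : η ≤ Real.sqrt K5 := hηle.trans ((min_le_right _ _).trans
    ((min_le_right _ _).trans ((min_le_right _ _).trans
      ((min_le_right _ _).trans ((min_le_right _ _).trans (min_le_left _ _))))))
  have hηK6 : η ≤ Real.sqrt K6 := hηle.trans ((min_le_right _ _).trans
    ((min_le_right _ _).trans ((min_le_right _ _).trans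
      ((min_le_right _ _).trans ((min_le_right _ _).trans
        ((min_le_right _ _).trans (min_le_left _ _)))))))
  have hηay : η ≤ (1 - bY) / (4 * (ay + 1)) := hηle.trans ((min_le_right _ _).trans
    ((min_le_right _ _).trans ((min_le_right _ _).trans
      ((min_le_right _ _).trans ((min_le_right _ _).trans
        ((min_le_right _ _).trans (min_le_right _ _)))))))
  -- derived inequalities
  have hη2μ : 2 * μ * η / 3 ≤ 1 := by
    rw [le_div_iff₀ (by linarith only [hμ] : (0:ℝ) < 2 * μ)] at hημ
    linarith only [hημ]
  have hsq1 : η ^ 2 ≤ ε ^ 2 * K1 := by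
    have h2 : η ^ 2 ≤ (ε * Real.sqrt K1) ^ 2 := pow_le_pow_left₀ hη0.le hηK1 2
    rwa [mul_pow, Real.sq_sqrt hK1p.le] at h2
  have hsq4 : η ^ 2 ≤ K4 := by
    have h2 : η ^ 2 ≤ (Real.sqrt K4) ^ 2 := pow_le_pow_left₀ hη0.le hηK4 2
    rwa [Real.sq_sqrt hK4p.le] at h2
  have hsq5 : η ^ 2 ≤ K5 := by
    have h2 : η ^ 2 ≤ (Real.sqrt K5) ^ 2 := pow_le_pow_left₀ hη0.le hηK5 2
    rwa [Real.sq_sqrt hK5p.le] at h2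
  have hsq6 : η ^ 2 ≤ K6 := by
    have h2 : η ^ 2 ≤ (Real.sqrt K6) ^ 2 := pow_le_pow_left₀ hη0.le hηK6 2
    rwa [Real.sq_sqrt hK6p.le] at h2
  -- row-sum auxiliary facts
  have hR1 : 10 * w1 / w2 * η ^ 2 * ε ≤ (1 - w1 / 2) / 2 * ε ^ 3 := by
    have h1 : 10 * w1 / w2 * η ^ 2 * ε ≤ 10 * w1 / w2 * (ε ^ 2 * K1) * ε :=
      mul_le_mul_of_nonneg_right
        (mul_le_mul_of_nonneg_left hsq1 (div_nonneg (by linarith only [hw1p]) hw2p.le))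
        hε0.le
    have h2 : 10 * w1 / w2 * (ε ^ 2 * K1) * ε = (1 - w1 / 2) / 2 * ε ^ 3 := by
      rw [hK1def]
      field_simp
      ring
    linarith only [h1, h2]
  have hR4 : (c2 + c4) * η ^ 2 ≤ (1 - w1 / 2) / 8 := by
    have h1 : (c2 + c4 + 1) * η ^ 2 ≤ (c2 + c4 + 1) * K4 :=
      mul_le_mul_of_nonneg_left hsq4 (by linarith only [hc2p, hc4n])
    have h2 : (c2 + c4 + 1) * K4 = (1 - w1 / 2) / 8 := by
      rw [hK4def]
      field_simp
    linarith only [h1, h2, sq_nonneg η]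
  have hR5 : 8 * w1 / w2 * η ^ 2 ≤ (1 - w1 / 2) / 8 * ε := by
    have h1 : 8 * w1 / w2 * η ^ 2 ≤ 8 * w1 / w2 * K5 :=
      mul_le_mul_of_nonneg_left hsq5 (div_nonneg (by linarith only [hw1p]) hw2p.le)
    have h2 : 8 * w1 / w2 * K5 = (1 - w1 / 2) / 8 * ε := by
      rw [hK5def]
      field_simp
      ring
    linarith only [h1, h2]
  have hR6 : 2 * ax * η ^ 2 ≤ (1 - bx) / 4 := by
    have h1 : 2 * ax * η ^ 2 ≤ 2 * ax * K6 :=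
      mul_le_mul_of_nonneg_left hsq6 (by linarith only [haxp])
    have h2 : 2 * ax * K6 = (1 - bx) / 4 := by
      rw [hK6def]
      field_simp
      ring
    linarith only [h1, h2]
  have hR7 : ay * η ≤ (1 - bY) / 4 := by
    have h1 : ay * η ≤ (ay + 1) * η := by
      have := mul_le_mul_of_nonneg_right (show ay ≤ ay + 1 by linarith only) hη0.le
      linarith only [this]
    have h2 : (ay + 1) * η ≤ (ay + 1) * ((1 - bY) / (4 * (ay + 1))) :=
      mul_le_mul_of_nonneg_left hηay (by linarith only [hayp])
    have h3 : (ay + 1) * ((1 - bY) / (4 * (ay + 1))) = (1 - bY) / 4 := by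
      field_simp
    linarith only [h1, h2, h3]
  -- positivity of the spectral radius
  have hdetη : 0 < (G η).det := hδ η (by rw [abs_of_pos hη0]; linarith only [hηδ, hδ0])
  constructor
  · exact specRad_pos_of_det_ne_zero (by norm_num) _ hdetη.ne'
  -- the weighted row sums are < 1
  refine specRad_lt_one_of_rows (by norm_num) _ ![ε ^ 3, ε, ε ^ 2, ε, 1] ?_ ?_ ?_
  · intro i
    fin_cases i
    · simpa using pow_pos hε0 3
    · simpa using hε0
    · simpa using pow_pos hε0 2
    · simpa using hε0
    · simp
  · -- all entries nonnegative
    intro i j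
    rw [hG η]
    have e1 : (0:ℝ) ≤ 2 * w1 * η ^ 2 / w2 :=
      div_nonneg (mul_nonneg (mul_nonneg (by norm_num) hw1p.le) (sq_nonneg η)) hw2p.le
    have e2 : (0:ℝ) ≤ 8 * ωc * w1 * η ^ 2 / w2 :=
      div_nonneg (mul_nonneg (mul_nonneg (mul_nonneg (by norm_num) hωc0) hw1p.le)
        (sq_nonneg η)) hw2p.le
    have e3 : (0:ℝ) ≤ c4 * η ^ 2 := mul_nonneg hc4n (sq_nonneg η)
    have e4 : (0:ℝ) ≤ 8 * w1 * ωc * η ^ 2 / w2 :=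
      div_nonneg (mul_nonneg (mul_nonneg (mul_nonneg (by norm_num) hw1p.le) hωc0)
        (sq_nonneg η)) hw2p.le
    have e5 : (0:ℝ) ≤ 1 - 2 * μ * η / 3 := by linarith only [hη2μ]
    have e6 : (0:ℝ) ≤ ax * ωc * η ^ 2 :=
      mul_nonneg (mul_nonneg haxp.le hωc0) (sq_nonneg η)
    have e7 : (0:ℝ) ≤ c5 * η := mul_nonneg hc5p.le hη0.le
    have e8 : (0:ℝ) ≤ (n:ℝ) * ax := mul_nonneg (by positivity) haxp.le
    have e9 : (0:ℝ) ≤ c2 * η ^ 2 := mul_nonneg hc2p.le (sq_nonneg η)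
    have e10 : (0:ℝ) ≤ c7 * ωc := mul_nonneg hc7p.le hωc0
    have e11 : (0:ℝ) ≤ ay * ωc * η := mul_nonneg (mul_nonneg hayp.le hωc0) hη0.le
    have e12 : (0:ℝ) ≤ ax * η ^ 2 := mul_nonneg haxp.le (sq_nonneg η)
    fin_cases i <;> fin_cases j <;> simp <;>
      linarith only [e1, e2, e3, e4, e5, e6, e7, e8, e9, e10, e11, e12, hw1p, hc1p, hc3p,
        hbxp, hbYp, haxp, hc6p, hc7p, hc8p]
  · -- the five weighted row sums
    intro i
    rw [hG η]
    have hXw : (0:ℝ) ≤ 8 * w1 * η ^ 2 / w2 :=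
      div_nonneg (mul_nonneg (mul_nonneg (by norm_num) hw1p.le) (sq_nonneg η)) hw2p.le
    fin_cases i
    · -- row 1 : < ε ^ 3
      simp [Fin.sum_univ_five]
      have hω1 : 8 * ωc * w1 * η ^ 2 / w2 * ε ≤ 8 * w1 * η ^ 2 / w2 * ε := by
        have h1 := mul_le_of_le_one_left (mul_nonneg hXw hε0.le) hωc1
        simp only [div_eq_mul_inv] at h1 ⊢
        linarith only [h1]
      have hw1e : w1 * ε ^ 3 < 2 * ε ^ 3 :=
        mul_lt_mul_of_pos_right hw1lt (pow_pos hε0 3)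
      simp only [div_eq_mul_inv] at hR1 hω1 ⊢
      linarith only [hR1, hω1, hw1e]
    · -- row 2 : < ε
      simp [Fin.sum_univ_five]
      have f1 : c1 * ε ^ 3 + c3 * ε ^ 2 ≤ (1 - w1 / 2) / 2 * ε := by
        have g1 : c1 * ε ^ 3 ≤ c1 * ε ^ 2 := mul_le_mul_of_nonneg_left hε32 hc1p.le
        have g2 : (c1 + c3) * ε * ε ≤ (1 - w1 / 2) / 2 * ε :=
          mul_le_mul_of_nonneg_right hE3 hε0.le
        linarith only [g1, g2]
      have f2 : c2 * η ^ 2 * ε + c4 * η ^ 2 * ε ≤ (1 - w1 / 2) / 8 * ε := by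
        have g1 := mul_le_mul_of_nonneg_right hR4 hε0.le
        linarith only [g1]
      have f3 : 8 * w1 * ωc * η ^ 2 / w2 ≤ (1 - w1 / 2) / 8 * ε := by
        have g1 := mul_le_of_le_one_left hXw hωc1
        simp only [div_eq_mul_inv] at g1 hR5 ⊢
        linarith only [g1, hR5]
      have hw1e : w1 * ε < 2 * ε := mul_lt_mul_of_pos_right hw1lt hε0
      simp only [div_eq_mul_inv] at f1 f2 f3 ⊢
      linarith only [f1, f2, f3, hw1e]
    · -- row 3 : < ε ^ 2
      simp [Fin.sum_univ_five]
      have h1 : c5 * ε * (ε ^ 2 * η) ≤ μ / 3 * (ε ^ 2 * η) :=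
        mul_le_mul_of_nonneg_right hE2 (mul_nonneg (sq_nonneg ε) hη0.le)
      have h2 : 0 < μ * (ε ^ 2 * η) := mul_pos hμ (mul_pos (pow_pos hε0 2) hη0)
      linarith only [h1, h2]
    · -- row 4 : < ε
      simp [Fin.sum_univ_five]
      have f1 : 2 * ax * ε ^ 3 + (n : ℝ) * ax * ε ^ 2 ≤ (1 - bx) / 2 * ε := by
        have g1 : 2 * ax * ε ^ 3 ≤ 2 * ax * ε ^ 2 :=
          mul_le_mul_of_nonneg_left hε32 (by linarith only [haxp])
        have g2 : ax * ((n : ℝ) + 2) * ε * ε ≤ (1 - bx) / 2 * ε :=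
          mul_le_mul_of_nonneg_right hE4 hε0.le
        linarith only [g1, g2]
      have f2 : ax * η ^ 2 * ε + ax * ωc * η ^ 2 * ε ≤ (1 - bx) / 4 * ε := by
        have g1 := mul_le_of_le_one_left
          (mul_nonneg (mul_nonneg haxp.le (sq_nonneg η)) hε0.le) hωc1
        have g2 := mul_le_mul_of_nonneg_right hR6 hε0.le
        linarith only [g1, g2]
      have hbxe : bx * ε < 1 * ε := mul_lt_mul_of_pos_right hbx1 hε0
      linarith only [f1, f2, hbxe]
    · -- row 5 : < 1
      simp [Fin.sum_univ_five]
      have f1 : c6 * ε ^ 3 + c8 * ε ^ 2 + c7 * ε + c7 * ωc * ε ≤ (1 - bY) / 2 := by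
        have g1 : c6 * ε ^ 3 ≤ c6 * ε := mul_le_mul_of_nonneg_left hε31 hc6p.le
        have g2 : c8 * ε ^ 2 ≤ c8 * ε := mul_le_mul_of_nonneg_left hε21 hc8p.le
        have g3 := mul_le_of_le_one_left (mul_nonneg hc7p.le hε0.le) hωc1
        linarith only [g1, g2, g3, hE5]
      have f2 : ay * ωc * η ≤ (1 - bY) / 4 := by
        have g1 := mul_le_of_le_one_left (mul_nonneg hayp.le hη0.le) hωc1
        linarith only [g1, hR7]
      linarith only [f1, f2, hbY1]
end
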